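/- arXiv:1409.5687 — 8 statements merged into one kernel-verified Lean document; each statement's English description precedes it below -/
import Mathlib

section
/- Let ρ ∈ (0, 1]. Then there exists a positive constant c₁ (depending only on ρ) such that for every real number b ≥ (e/ρ)^ρ, one has ∑_{j=0}^∞ (b / j^ρ)^j ≥ exp(c₁ · b^{1/ρ}), where the j = 0 term of the series is interpreted as 1. (In fact the inequality holds with c₁ = ρ/(2e).) -/
open scoped Real

/-- Let `ρ ∈ (0, 1]`. There exists `c₁ > 0` (depending only on `ρ`) such that for every
`b ≥ (e/ρ)^ρ` one has `∑_{j=0}^∞ (b / j^ρ)^j ≥ exp (c₁ * b^(1/ρ))`, where the `j = 0`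
term of the series is interpreted as `1`. -/
theorem sum_pow_lower_bound (ρ : ℝ) (hρ0 : 0 < ρ) (hρ1 : ρ ≤ 1) :
    ∃ c₁ > 0, ∀ b : ℝ, (Real.exp 1 / ρ) ^ ρ ≤ b →
      Real.exp (c₁ * b ^ (1 / ρ)) ≤
        ∑' j : ℕ, (if j = 0 then (1 : ℝ) else (b / (j : ℝ) ^ ρ) ^ j) := by
  have he : (1 : ℝ) < Real.exp 1 := by
    have := Real.exp_one_gt_d9; linarith
  have hepos : (0 : ℝ) < Real.exp 1 := Real.exp_pos 1
  refine ⟨ρ / (2 * Real.exp 1), by positivity, fun b hb => ?_⟩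
  set f : ℕ → ℝ := fun j => if j = 0 then (1 : ℝ) else (b / (j : ℝ) ^ ρ) ^ j with hf
  have heρ : (1 : ℝ) ≤ Real.exp 1 / ρ := by
    rw [le_div_iff₀ hρ0]; nlinarith
  have hb1 : (1 : ℝ) ≤ b := le_trans (Real.one_le_rpow heρ hρ0.le) hb
  have hb0 : (0 : ℝ) < b := by linarith
  set t : ℝ := b ^ (1 / ρ) with ht
  have ht0 : 0 < t := Real.rpow_pos_of_pos hb0 _
  have htρ : t ^ ρ = b := by
    rw [ht, ← Real.rpow_mul hb0.le, one_div, inv_mul_cancel₀ hρ0.ne', Real.rpow_one]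
  -- t ≥ e/ρ ≥ e
  have hte : Real.exp 1 ≤ t := by
    have h1 : ((Real.exp 1 / ρ) ^ ρ) ^ (1 / ρ) ≤ t := by
      apply Real.rpow_le_rpow (Real.rpow_nonneg (by positivity) _) hb (by positivity)
    rw [← Real.rpow_mul (by positivity), mul_one_div, div_self hρ0.ne', Real.rpow_one]
      at h1
    calc Real.exp 1 ≤ Real.exp 1 / ρ := by
          rw [le_div_iff₀ hρ0]; nlinarith
      _ ≤ t := h1
  -- choose j
  set j : ℕ := ⌊t / Real.exp 1⌋₊ with hj
  have hx1 : (1 : ℝ) ≤ t / Real.exp 1 := by rw [le_div_iff₀ hepos]; linarith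
  have hj1 : 1 ≤ j := Nat.le_floor (by exact_mod_cast hx1)
  have hjx : (j : ℝ) ≤ t / Real.exp 1 := Nat.floor_le (by linarith)
  have hjhalf : t / (2 * Real.exp 1) ≤ (j : ℝ) := by
    rcases le_or_gt (t / Real.exp 1) 2 with h | h
    · have : t / (2 * Real.exp 1) ≤ 1 := by
        rw [div_le_one (by positivity)]
        rw [div_le_iff₀ hepos] at h; linarith
      calc t / (2 * Real.exp 1) ≤ 1 := this
        _ ≤ (j : ℝ) := by exact_mod_cast hj1
    · have h2 : t / Real.exp 1 - 1 < (j : ℝ) := Nat.sub_one_lt_floor _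
      have : t / (2 * Real.exp 1) ≤ t / Real.exp 1 - 1 := by
        have e1 : t / (2 * Real.exp 1) = (t / Real.exp 1) / 2 := by ring
        rw [e1]; linarith
      linarith
  have hjpos : (0 : ℝ) < (j : ℝ) := by exact_mod_cast hj1
  -- key lower bound on term j
  have hkey : Real.exp ρ ≤ b / (j : ℝ) ^ ρ := by
    have h1 : (j : ℝ) ^ ρ ≤ (t / Real.exp 1) ^ ρ :=
      Real.rpow_le_rpow hjpos.le hjx hρ0.le
    have h2 : (t / Real.exp 1) ^ ρ = b / Real.exp ρ := by
      rw [Real.div_rpow ht0.le hepos.le, htρ, Real.exp_one_rpow]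
    rw [h2] at h1
    have hjρ : (0 : ℝ) < (j : ℝ) ^ ρ := Real.rpow_pos_of_pos hjpos _
    rw [le_div_iff₀ hjρ]
    calc Real.exp ρ * (j : ℝ) ^ ρ ≤ Real.exp ρ * (b / Real.exp ρ) := by
          exact mul_le_mul_of_nonneg_left h1 (Real.exp_pos ρ).le
      _ = b := by field_simp
  have hterm : Real.exp (ρ / (2 * Real.exp 1) * t) ≤ f j := by
    have h1 : f j = (b / (j : ℝ) ^ ρ) ^ j := by
      simp only [hf]; rw [if_neg (by omega : j ≠ 0)]
    have h2 : Real.exp ρ ^ j ≤ (b / (j : ℝ) ^ ρ) ^ j :=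
      pow_le_pow_left₀ (Real.exp_pos ρ).le hkey j
    have h3 : Real.exp (ρ / (2 * Real.exp 1) * t) ≤ Real.exp ρ ^ j := by
      rw [← Real.exp_nat_mul]
      apply Real.exp_le_exp.mpr
      have : ρ / (2 * Real.exp 1) * t = ρ * (t / (2 * Real.exp 1)) := by ring
      rw [this]
      nlinarith [mul_le_mul_of_nonneg_left hjhalf hρ0.le]
    rw [h1]; exact h3.trans h2
  -- nonnegativity
  have hnn : ∀ i, 0 ≤ f i := by
    intro i
    by_cases hi : i = 0
    · simp [hf, hi]
    · simp only [hf, hi, if_false]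
      positivity
  -- summability
  have hsum : Summable f := by
    apply Summable.of_norm_bounded_eventually_nat summable_geometric_two
    filter_upwards [Filter.eventually_ge_atTop (⌈(2 * b) ^ (1 / ρ)⌉₊ + 1)] with n hn
    have hn1 : n ≠ 0 := by omega
    have hn0 : (0 : ℝ) < (n : ℝ) := by
      exact_mod_cast (by omega : 0 < n)
    have hcn : (2 * b) ^ (1 / ρ) ≤ (n : ℝ) := by
      calc (2 * b) ^ (1 / ρ) ≤ (⌈(2 * b) ^ (1 / ρ)⌉₊ : ℝ) := Nat.le_ceil _
        _ ≤ (n : ℝ) := by exact_mod_cast (by omega : ⌈(2 * b) ^ (1 / ρ)⌉₊ ≤ n)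
    have hnρ : 2 * b ≤ (n : ℝ) ^ ρ := by
      have h1 : ((2 * b) ^ (1 / ρ)) ^ ρ ≤ (n : ℝ) ^ ρ :=
        Real.rpow_le_rpow (Real.rpow_nonneg (by positivity) _) hcn hρ0.le
      rwa [← Real.rpow_mul (by positivity), one_div, inv_mul_cancel₀ hρ0.ne',
        Real.rpow_one] at h1
    have hnρ0 : (0 : ℝ) < (n : ℝ) ^ ρ := Real.rpow_pos_of_pos hn0 _
    have hhalf : b / (n : ℝ) ^ ρ ≤ 1 / 2 := by
      rw [div_le_div_iff₀ hnρ0 (by norm_num)]; linarith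
    have hfe : f n = (b / (n : ℝ) ^ ρ) ^ n := by simp [hf, hn1]
    rw [Real.norm_eq_abs, abs_of_nonneg (hnn n), hfe]
    exact pow_le_pow_left₀ (by positivity) hhalf n
  calc Real.exp (ρ / (2 * Real.exp 1) * t) ≤ f j := hterm
    _ ≤ ∑' i, f i := Summable.le_tsum hsum j (fun i _ => hnn i)
end

section
/- Let ρ ∈ (0, 1]. Then there exist positive constants c₁ and c₂ (depending only on ρ) such that for every real number b > 0, one has ∑_{j=0}^∞ b^j / Γ(jρ + 1) ≤ c₁ · exp(c₂ · b^{1/ρ}). -/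
open Real

-- Lemma A: Γ(1+t) ≥ 1/2 for t ∈ [0,1]
lemma gamma_one_add_half {t : ℝ} (h0 : 0 ≤ t) (h1 : t ≤ 1) : (1:ℝ)/2 ≤ Real.Gamma (1 + t) := by
  have h2 : Real.Gamma ((1 + t) + 1) = (1 + t) * Real.Gamma (1 + t) :=
    Real.Gamma_add_one (by linarith)
  have hmono := Real.Gamma_strictMonoOn_Ici.monotoneOn
  have h3 : Real.Gamma 2 ≤ Real.Gamma ((1+t)+1) := by
    apply hmono (by simp [Set.mem_Ici]) (by simp [Set.mem_Ici]; linarith) (by linarith)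
  rw [Real.Gamma_two] at h3
  rw [h2] at h3
  nlinarith [Real.Gamma_pos_of_pos (show (0:ℝ) < 1 + t by linarith)]

-- Lemma B: Γ(n+1+t) ≥ n! * Γ(1+t)
lemma gamma_nat_add_ge (n : ℕ) {t : ℝ} (h0 : 0 ≤ t) :
    (Nat.factorial n : ℝ) * Real.Gamma (1 + t) ≤ Real.Gamma ((n : ℝ) + 1 + t) := by
  induction n with
  | zero => simp
  | succ n ih =>
    have hne : ((n:ℝ) + 1 + t) ≠ 0 := by positivity
    have h2 : Real.Gamma (((n:ℝ) + 1 + t) + 1) = ((n:ℝ) + 1 + t) * Real.Gamma ((n:ℝ)+1+t) :=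
      Real.Gamma_add_one hne
    have h3 : ((n:ℝ)+1+1+t) = ((n:ℝ)+1+t)+1 := by ring
    rw [Nat.factorial_succ]
    push_cast
    rw [h3, h2]
    have hg : 0 ≤ Real.Gamma (1+t) := (Real.Gamma_pos_of_pos (by linarith)).le
    have hnn : (0:ℝ) ≤ (Nat.factorial n : ℝ) := by positivity
    nlinarith [ih, Real.Gamma_pos_of_pos (show (0:ℝ) < (n:ℝ)+1+t by positivity)]

-- key: Γ(x+1) ≥ ⌊x⌋!/2
lemma floor_factorial_le_gamma {x : ℝ} (hx : 0 ≤ x) :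
    (Nat.factorial (Nat.floor x) : ℝ) / 2 ≤ Real.Gamma (x + 1) := by
  set n := Nat.floor x with hn
  have hfl : (n : ℝ) ≤ x := Nat.floor_le hx
  have hfl2 : x < (n : ℝ) + 1 := Nat.lt_floor_add_one x
  set t := x - n with ht
  have h0 : 0 ≤ t := by simp [ht]; linarith
  have h1 : t ≤ 1 := by simp [ht]; linarith
  have hx1 : x + 1 = (n:ℝ) + 1 + t := by simp [ht]; ring
  rw [hx1]
  calc (Nat.factorial n : ℝ)/2 ≤ (Nat.factorial n : ℝ) * Real.Gamma (1 + t) := by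
        have := gamma_one_add_half h0 h1
        have hnn : (0:ℝ) ≤ (Nat.factorial n : ℝ) := by positivity
        nlinarith
    _ ≤ _ := gamma_nat_add_ge n h0


/-- Let `ρ ∈ (0, 1]`. There exist positive constants `c₁` and `c₂` (depending only on `ρ`)
such that for every `b > 0`, `∑_{j=0}^∞ b^j / Γ(jρ + 1) ≤ c₁ * exp (c₂ * b^(1/ρ))`. -/
theorem sum_div_gamma_upper_bound (ρ : ℝ) (hρ0 : 0 < ρ) (hρ1 : ρ ≤ 1) :
    ∃ c₁ > 0, ∃ c₂ > 0, ∀ b : ℝ, 0 < b →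
      (∑' j : ℕ, b ^ j / Real.Gamma ((j : ℝ) * ρ + 1)) ≤ c₁ * Real.exp (c₂ * b ^ (1 / ρ)) := by
  set r := (2:ℝ) ^ (-ρ) with hr
  have hr0 : 0 < r := Real.rpow_pos_of_pos (by norm_num) _
  have hr1 : r < 1 := Real.rpow_lt_one_of_one_lt_of_neg (by norm_num) (by linarith)
  have h1r : 0 < 1 - r := by linarith
  refine ⟨4 * Real.exp 3 / (1 - r), by positivity, 3, by norm_num, ?_⟩
  intro b hb
  set B := max 1 (b ^ (1/ρ)) with hB
  have hB1 : (1:ℝ) ≤ B := le_max_left _ _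
  have hB0 : (0:ℝ) < B := lt_of_lt_of_le one_pos hB1
  have hbB : b ≤ B ^ ρ := by
    have hbb : (b ^ (1/ρ)) ^ ρ = b := by
      rw [← Real.rpow_mul hb.le, one_div_mul_cancel hρ0.ne', Real.rpow_one]
    calc b = (b ^ (1/ρ)) ^ ρ := hbb.symm
      _ ≤ B ^ ρ := Real.rpow_le_rpow (Real.rpow_nonneg hb.le _) (le_max_right _ _) hρ0.le
  have key : ∀ j : ℕ, b ^ j / Real.Gamma ((j:ℝ)*ρ+1) ≤ (4*B*Real.exp (2*B)) * r ^ j := by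
    intro j
    set x := (j:ℝ)*ρ with hx
    have hx0 : 0 ≤ x := by positivity
    set n := Nat.floor x with hn
    have hxn : x < (n:ℝ) + 1 := Nat.lt_floor_add_one x
    have hgam := floor_factorial_le_gamma hx0
    have hfac : (0:ℝ) < Nat.factorial n := by positivity
    have hgam0 : 0 < Real.Gamma (x+1) := lt_of_lt_of_le (by positivity) hgam
    have hbj : b ^ j ≤ B ^ (n+1) := by
      have h1 : b ^ j = (b : ℝ) ^ (j : ℝ) := (Real.rpow_natCast b j).symm
      have h2 : (b:ℝ)^(j:ℝ) ≤ (B^ρ)^(j:ℝ) :=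
        Real.rpow_le_rpow hb.le hbB (by positivity)
      have h3 : (B^ρ)^(j:ℝ) = B ^ x := by
        rw [← Real.rpow_mul hB0.le]
        congr 1
        rw [hx]; ring
      have h4 : B ^ x ≤ B ^ ((n:ℝ)+1) := Real.rpow_le_rpow_of_exponent_le hB1 hxn.le
      have h5 : B ^ ((n:ℝ)+1) = B ^ (n+1 : ℕ) := by
        rw [← Real.rpow_natCast B (n+1)]; push_cast; ring_nf
      rw [h1, ← h5]
      calc (b:ℝ)^(j:ℝ) ≤ (B^ρ)^(j:ℝ) := h2
        _ = B ^ x := h3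
        _ ≤ B ^ ((n:ℝ)+1) := h4
    have hexp : (2*B)^n / Nat.factorial n ≤ Real.exp (2*B) := by
      refine le_trans ?_ (Real.sum_le_exp_of_nonneg (by positivity) (n+1))
      exact Finset.single_le_sum (f := fun i => (2*B)^i / Nat.factorial i)
        (fun i _ => by positivity) (Finset.self_mem_range_succ n)
    have hpow2 : ((2:ℝ)^n)⁻¹ ≤ 2 * r ^ j := by
      have e1 : ((2:ℝ)^n)⁻¹ = (2:ℝ) ^ (-(n:ℝ)) := by
        rw [← Real.rpow_natCast 2 n, ← Real.rpow_neg (by norm_num)]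
      have e2 : (2:ℝ) ^ (1 - x) = (2:ℝ) * r ^ j := by
        rw [hr, ← Real.rpow_natCast ((2:ℝ)^(-ρ)) j,
          ← Real.rpow_mul (by norm_num : (0:ℝ) ≤ 2),
          show (1:ℝ) - x = 1 + (-ρ*(j:ℕ)) by rw [hx]; ring,
          Real.rpow_add (by norm_num : (0:ℝ) < 2), Real.rpow_one]
      rw [e1, ← e2]
      exact Real.rpow_le_rpow_of_exponent_le (by norm_num) (by linarith)
    calc b ^ j / Real.Gamma (x+1)
        ≤ B^(n+1) / ((Nat.factorial n : ℝ) / 2) := by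
          apply div_le_div₀ (by positivity) hbj (by positivity) hgam
      _ = (2*B) * ((2*B)^n/(Nat.factorial n : ℝ)) * ((2:ℝ)^n)⁻¹ := by
          rw [mul_pow]; field_simp; ring
      _ ≤ (2*B) * Real.exp (2*B) * (2 * r ^ j) := by
          have s1 := mul_le_mul_of_nonneg_left hexp (by positivity : (0:ℝ) ≤ 2*B)
          exact mul_le_mul s1 hpow2 (by positivity) (by positivity)
      _ = (4*B*Real.exp (2*B)) * r ^ j := by ring
  have hg_sum : Summable (fun j : ℕ => (4*B*Real.exp (2*B)) * r ^ j) :=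
    (summable_geometric_of_lt_one hr0.le hr1).mul_left _
  have hf_sum : Summable (fun j : ℕ => b ^ j / Real.Gamma ((j:ℝ)*ρ+1)) := by
    refine Summable.of_nonneg_of_le (fun j => ?_) key hg_sum
    have : 0 < Real.Gamma ((j:ℝ)*ρ+1) := Real.Gamma_pos_of_pos (by positivity)
    positivity
  have htsum : (∑' j : ℕ, b ^ j / Real.Gamma ((j:ℝ)*ρ+1))
      ≤ (4*B*Real.exp (2*B)) * (1-r)⁻¹ := by
    calc (∑' j : ℕ, b ^ j / Real.Gamma ((j:ℝ)*ρ+1))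
        ≤ ∑' j : ℕ, (4*B*Real.exp (2*B)) * r ^ j := Summable.tsum_le_tsum key hf_sum hg_sum
      _ = (4*B*Real.exp (2*B)) * (1-r)⁻¹ := by
          rw [tsum_mul_left, tsum_geometric_of_lt_one hr0.le hr1]
  refine le_trans htsum ?_
  have hB2 : B ≤ 1 + b ^ (1/ρ) :=
    max_le (le_add_of_nonneg_right (Real.rpow_nonneg hb.le _))
      (le_add_of_nonneg_left zero_le_one)
  have hBexpB : B ≤ Real.exp B := by
    have := Real.add_one_le_exp B; linarith
  have hBexp : B * Real.exp (2*B) ≤ Real.exp (3*B) := by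
    have h := mul_le_mul_of_nonneg_right hBexpB (Real.exp_pos (2*B)).le
    rwa [← Real.exp_add, show B + 2*B = 3*B by ring] at h
  have hfin : Real.exp (3*B) ≤ Real.exp 3 * Real.exp (3 * b ^ (1/ρ)) := by
    rw [← Real.exp_add]
    exact Real.exp_le_exp.mpr (by linarith)
  calc (4*B*Real.exp (2*B)) * (1-r)⁻¹
      = 4 * (B * Real.exp (2*B)) * (1-r)⁻¹ := by ring
    _ ≤ 4 * (Real.exp 3 * Real.exp (3 * b ^ (1/ρ))) * (1-r)⁻¹ := by
        apply mul_le_mul_of_nonneg_right _ (by positivity)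
        have := le_trans hBexp hfin
        nlinarith
    _ = 4 * Real.exp 3 / (1 - r) * Real.exp (3 * b ^ (1/ρ)) := by
        field_simp
end

section
/- Let ρ > 0, let κ > 0 and c₁ > 0, and let f : (0, ∞) → [0, ∞) be a measurable, locally integrable function satisfying f(t) ≤ c₁ + κ ∫₀^t (t − s)^{ρ−1} f(s) ds for all t > 0. Then for every t > 0 one has f(t) ≤ c₁ · ∑_{k=0}^∞ (Γ(ρ) · κ · t^ρ)^k / Γ(kρ + 1). -/
open MeasureTheory

open Set
open scoped ENNReal NNReal

lemma gamma_lower_bound {x A : ℝ} (hx : 1 ≤ x) (hA : 1 ≤ A) :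
    A ^ x * Real.exp (-(2 * A)) ≤ Real.Gamma x := by
  have hA0 : 0 < A := by linarith
  have hx0 : 0 < x := by linarith
  rw [Real.Gamma_eq_integral hx0]
  have hint : IntegrableOn (fun t : ℝ => Real.exp (-t) * t ^ (x - 1)) (Ioi 0) :=
    Real.GammaIntegral_convergent hx0
  have hss : Ioc A (2 * A) ⊆ Ioi 0 := fun t ht => hA0.trans ht.1
  have hsub : IntegrableOn (fun t : ℝ => Real.exp (-t) * t ^ (x - 1)) (Ioc A (2 * A)) :=
    hint.mono_set hss
  have step1 : ∫ t in Ioc A (2 * A), Real.exp (-t) * t ^ (x - 1) ≤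
      ∫ t in Ioi 0, Real.exp (-t) * t ^ (x - 1) := by
    apply setIntegral_mono_set hint
    · filter_upwards [ae_restrict_mem measurableSet_Ioi] with t ht
      exact mul_nonneg (Real.exp_pos _).le (Real.rpow_nonneg (le_of_lt ht) _)
    · exact Filter.Eventually.of_forall hss
  refine le_trans ?_ step1
  have step2 : Real.exp (-(2 * A)) * A ^ (x - 1) * (volume (Ioc A (2 * A))).toReal ≤
      ∫ t in Ioc A (2 * A), Real.exp (-t) * t ^ (x - 1) := by
    apply setIntegral_ge_of_const_le_real measurableSet_Ioc (by simp)
    · intro t ht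
      apply mul_le_mul
      · exact Real.exp_le_exp.2 (by linarith [ht.2])
      · exact Real.rpow_le_rpow hA0.le ht.1.le (by linarith)
      · exact Real.rpow_nonneg hA0.le _
      · exact (Real.exp_pos _).le
    · exact hsub
  refine le_trans (le_of_eq ?_) step2
  rw [Real.volume_Ioc]
  rw [ENNReal.toReal_ofReal (by linarith)]
  have : A ^ x = A ^ (x - 1) * A := by
    rw [← Real.rpow_add_one hA0.ne' (x - 1)]; ring_nf
  rw [this]; ring_nf

lemma ml_geom_bound (ρ c : ℝ) (hρ : 0 < ρ) (hc : 0 ≤ c) :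
    ∃ B : ℝ, 0 ≤ B ∧ ∀ n : ℕ, c ^ n / Real.Gamma ((n : ℝ) * ρ + 1) ≤ B * (1 / 2) ^ n := by
  set A : ℝ := max 1 ((2 * c) ^ ρ⁻¹) with hAdef
  have hA1 : 1 ≤ A := le_max_left _ _
  have hA0 : 0 < A := lt_of_lt_of_le one_pos hA1
  have hAρ : 2 * c ≤ A ^ ρ := by
    calc 2 * c = ((2 * c) ^ ρ⁻¹) ^ ρ := (Real.rpow_inv_rpow (by linarith) hρ.ne').symm
      _ ≤ A ^ ρ := Real.rpow_le_rpow (Real.rpow_nonneg (by linarith) _) (le_max_right _ _) hρ.le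
  have hAρ0 : 0 < A ^ ρ := Real.rpow_pos_of_pos hA0 _
  refine ⟨Real.exp (2 * A) / A, by positivity, fun n => ?_⟩
  have hnρ : 0 ≤ (n : ℝ) * ρ := by positivity
  have hx1 : 1 ≤ (n : ℝ) * ρ + 1 := by linarith
  have hΓlb : A ^ ((n : ℝ) * ρ + 1) * Real.exp (-(2 * A)) ≤ Real.Gamma ((n : ℝ) * ρ + 1) :=
    gamma_lower_bound hx1 hA1
  have hden_pos : 0 < A ^ ((n : ℝ) * ρ + 1) * Real.exp (-(2 * A)) := by positivity
  calc c ^ n / Real.Gamma ((n : ℝ) * ρ + 1)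
      ≤ c ^ n / (A ^ ((n : ℝ) * ρ + 1) * Real.exp (-(2 * A))) :=
        div_le_div_of_nonneg_left (by positivity) hden_pos hΓlb
    _ = Real.exp (2 * A) / A * (c / A ^ ρ) ^ n := by
        rw [Real.rpow_add hA0, Real.rpow_one, mul_comm (n : ℝ) ρ, Real.rpow_mul_natCast hA0.le,
          Real.exp_neg, div_pow]
        field_simp
    _ ≤ Real.exp (2 * A) / A * (1 / 2) ^ n := by
        apply mul_le_mul_of_nonneg_left _ (by positivity)
        apply pow_le_pow_left₀ (by positivity)
        rw [div_le_div_iff₀ hAρ0 two_pos]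
        linarith

lemma real_beta {a b : ℝ} (ha : 0 < a) (hb : 0 < b) :
    ∫ x in (0:ℝ)..1, x ^ (a - 1) * (1 - x) ^ (b - 1) =
      Real.Gamma a * Real.Gamma b / Real.Gamma (a + b) := by
  have hab : 0 < Real.Gamma (a + b) := Real.Gamma_pos_of_pos (by linarith)
  have hbeta : Complex.betaIntegral a b =
      ((∫ x in (0:ℝ)..1, x ^ (a - 1) * (1 - x) ^ (b - 1) : ℝ) : ℂ) := by
    rw [Complex.betaIntegral]
    rw [intervalIntegral.integral_of_le zero_le_one, intervalIntegral.integral_of_le zero_le_one]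
    have : ((∫ x in Ioc (0:ℝ) 1, x ^ (a - 1) * (1 - x) ^ (b - 1) : ℝ) : ℂ) =
        ∫ x in Ioc (0:ℝ) 1, ((x ^ (a - 1) * (1 - x) ^ (b - 1) : ℝ) : ℂ) :=
      (integral_ofReal).symm
    rw [this]
    refine setIntegral_congr_fun measurableSet_Ioc fun x hx => ?_
    have hx0 : (0:ℝ) ≤ x := hx.1.le
    have hx1 : (0:ℝ) ≤ 1 - x := by linarith [hx.2]
    rw [Complex.ofReal_mul, Complex.ofReal_cpow hx0, Complex.ofReal_cpow hx1]
    push_cast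
    ring_nf
  have h := Complex.Gamma_mul_Gamma_eq_betaIntegral
    (by simpa using ha : 0 < (a : ℂ).re) (by simpa using hb : 0 < (b : ℂ).re)
  rw [hbeta, Complex.Gamma_ofReal, Complex.Gamma_ofReal] at h
  have h2 : ((Real.Gamma a * Real.Gamma b : ℝ) : ℂ) =
      ((Real.Gamma (a + b) * ∫ x in (0:ℝ)..1, x ^ (a - 1) * (1 - x) ^ (b - 1) : ℝ) : ℂ) := by
    push_cast
    rw [h, ← Complex.ofReal_add, Complex.Gamma_ofReal]
  have h3 := Complex.ofReal_injective h2
  field_simp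
  linarith [h3]

lemma conv_lintegral {a b u t : ℝ} (ha : 0 < a) (hb : 0 < b) (hut : u < t) :
    ∫⁻ s in Set.Ioo u t, ENNReal.ofReal ((t - s) ^ (a - 1) * (s - u) ^ (b - 1)) =
      ENNReal.ofReal
        (Real.Gamma a * Real.Gamma b / Real.Gamma (a + b) * (t - u) ^ (a + b - 1)) := by
  have hT : (0:ℝ) < t - u := by linarith
  set k : ℝ := (t - u)⁻¹ with hk
  have hk0 : k ≠ 0 := inv_ne_zero hT.ne'
  set h : ℝ → ℝ := fun x => x ^ (b - 1) * (1 - x) ^ (a - 1) with hh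
  set C : ℝ := (t - u) ^ (a - 1) * (t - u) ^ (b - 1) with hC
  -- integrability of the beta integrand on (0,1)
  have hcplx := Complex.betaIntegral_convergent
    (by simpa using hb : 0 < (b:ℂ).re) (by simpa using ha : 0 < (a:ℂ).re)
  have hbeta_int : IntervalIntegrable h volume 0 1 := by
    rw [intervalIntegrable_iff_integrableOn_Ioc_of_le zero_le_one] at hcplx ⊢
    have : IntegrableOn (fun x : ℝ =>
        RCLike.re ((x:ℂ) ^ ((b:ℂ) - 1) * (1 - (x:ℂ)) ^ ((a:ℂ) - 1))) (Ioc 0 1) :=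
      hcplx.re
    apply this.congr_fun _ measurableSet_Ioc
    intro x hx
    have hx0 : (0:ℝ) ≤ x := hx.1.le
    have hx1 : (0:ℝ) ≤ 1 - x := by linarith [hx.2]
    have : ((x:ℂ) ^ ((b:ℂ) - 1) * (1 - (x:ℂ)) ^ ((a:ℂ) - 1)) = ((h x : ℝ) : ℂ) := by
      rw [hh]
      rw [Complex.ofReal_mul, Complex.ofReal_cpow hx0, Complex.ofReal_cpow hx1]
      push_cast
      ring_nf
    rw [hh]
    simp [this]
    rfl
  -- pointwise identity on Ioo u t
  have hpt : ∀ s ∈ Ioo u t, (t - s) ^ (a - 1) * (s - u) ^ (b - 1) = C * h ((s - u) * k) := by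
    intro s hs
    have h1 : (0:ℝ) < s - u := by linarith [hs.1]
    have h2 : (0:ℝ) < t - s := by linarith [hs.2]
    have e1 : (s - u) * k = (s - u) / (t - u) := by rw [hk, div_eq_mul_inv]
    have e2 : 1 - (s - u) / (t - u) = (t - s) / (t - u) := by field_simp; ring
    rw [hh, hC, e1]
    dsimp only
    rw [e2, Real.div_rpow h1.le hT.le, Real.div_rpow h2.le hT.le]
    have n1 : (t - u) ^ (a - 1) ≠ 0 := (Real.rpow_pos_of_pos hT _).ne'
    have n2 : (t - u) ^ (b - 1) ≠ 0 := (Real.rpow_pos_of_pos hT _).ne'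
    field_simp
  -- integrability on Ioo u t
  have hint : IntegrableOn (fun s => (t - s) ^ (a - 1) * (s - u) ^ (b - 1)) (Ioo u t) := by
    have h2 : IntervalIntegrable (fun x => h (x * k)) volume (0 / k) (1 / k) :=
      hbeta_int.comp_mul_right (c := k)
    rw [zero_div, one_div, hk, inv_inv] at h2
    have h3 : IntervalIntegrable (fun s => h ((s - u) * k)) volume (0 + u) ((t - u) + u) :=
      h2.comp_sub_right u
    rw [zero_add, sub_add_cancel] at h3
    rw [intervalIntegrable_iff_integrableOn_Ioo_of_le hut.le] at h3
    have h4 : IntegrableOn (fun x => C * h ((x - u) * k)) (Ioo u t) := h3.const_mul C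
    exact h4.congr_fun (fun s hs => (hpt s hs).symm) measurableSet_Ioo
  -- convert lintegral to integral
  rw [← ofReal_integral_eq_lintegral_ofReal hint]
  · congr 1
    calc ∫ s in Ioo u t, (t - s) ^ (a - 1) * (s - u) ^ (b - 1)
        = ∫ s in Ioo u t, C * h ((s - u) * k) := setIntegral_congr_fun measurableSet_Ioo hpt
      _ = C * ∫ s in Ioo u t, h ((s - u) * k) := integral_const_mul _ _
      _ = C * ∫ s in u..t, h ((s - u) * k) := by
          rw [intervalIntegral.integral_of_le hut.le, ← integral_Ioc_eq_integral_Ioo]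
      _ = C * ∫ x in (0:ℝ)..(t - u), h (x * k) := by
          rw [intervalIntegral.integral_comp_sub_right (fun y => h (y * k)) u, sub_self]
      _ = C * ((t - u) • ∫ x in (0:ℝ)..1, h x) := by
          rw [intervalIntegral.integral_comp_mul_right _ hk0, zero_mul, hk,
            mul_inv_cancel₀ hT.ne', inv_inv]
      _ = Real.Gamma a * Real.Gamma b / Real.Gamma (a + b) * (t - u) ^ (a + b - 1) := by
          rw [hh, real_beta hb ha, hC, smul_eq_mul,
            show a + b - 1 = a - 1 + (b - 1) + 1 by ring, Real.rpow_add hT,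
            Real.rpow_add hT, Real.rpow_one,
            show Real.Gamma (b + a) = Real.Gamma (a + b) by rw [add_comm]]
          ring
  · filter_upwards [ae_restrict_mem measurableSet_Ioo] with s hs
    exact mul_nonneg (Real.rpow_nonneg (by linarith [hs.2]) _)
      (Real.rpow_nonneg (by linarith [hs.1]) _)

section Iterate

variable (ρ κ c₁ : ℝ) (f : ℝ → ℝ)

lemma key_step (hρ : 0 < ρ) (hκ : 0 < κ) (hc₁ : 0 < c₁)
    (hf_nonneg : ∀ t, 0 < t → 0 ≤ f t)
    (hf : ∀ t, 0 < t → f t ≤ c₁ + κ * ∫ s in Set.Ioo 0 t, (t - s) ^ (ρ - 1) * f s) :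
    ∀ t, 0 < t → ENNReal.ofReal (f t) ≤ ENNReal.ofReal c₁ +
      ENNReal.ofReal κ * ∫⁻ s in Set.Ioo 0 t, ENNReal.ofReal ((t - s) ^ (ρ - 1) * f s) := by
  intro t ht
  have hI : 0 ≤ ∫ s in Set.Ioo 0 t, (t - s) ^ (ρ - 1) * f s :=
    setIntegral_nonneg measurableSet_Ioo fun s hs =>
      mul_nonneg (Real.rpow_nonneg (by linarith [hs.2]) _) (hf_nonneg s hs.1)
  refine le_trans (ENNReal.ofReal_le_ofReal (hf t ht)) ?_
  rw [ENNReal.ofReal_add hc₁.le (mul_nonneg hκ.le hI), ENNReal.ofReal_mul hκ.le]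
  refine add_le_add_right (mul_le_mul_right ?_ _) _
  by_cases hInt : IntegrableOn (fun s => (t - s) ^ (ρ - 1) * f s) (Set.Ioo 0 t)
  · rw [ofReal_integral_eq_lintegral_ofReal hInt ?_]
    filter_upwards [ae_restrict_mem measurableSet_Ioo] with s hs
    exact mul_nonneg (Real.rpow_nonneg (by linarith [hs.2]) _) (hf_nonneg s hs.1)
  · rw [integral_undef hInt]
    simp

lemma iterate_bound (hρ : 0 < ρ) (hκ : 0 < κ) (hc₁ : 0 < c₁)
    (hf_meas : Measurable f)
    (hf_nonneg : ∀ t, 0 < t → 0 ≤ f t)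
    (hf : ∀ t, 0 < t → f t ≤ c₁ + κ * ∫ s in Set.Ioo 0 t, (t - s) ^ (ρ - 1) * f s) :
    ∀ n : ℕ, ∀ t, 0 < t →
      ENNReal.ofReal (f t) ≤
        ENNReal.ofReal c₁ *
          (∑ k ∈ Finset.range (n + 1),
            ENNReal.ofReal ((Real.Gamma ρ * κ * t ^ ρ) ^ k / Real.Gamma ((k : ℝ) * ρ + 1))) +
        ENNReal.ofReal (κ ^ (n + 1) * Real.Gamma ρ ^ (n + 1) / Real.Gamma (((n : ℝ) + 1) * ρ)) *
          ∫⁻ s in Set.Ioo 0 t, ENNReal.ofReal ((t - s) ^ (((n : ℝ) + 1) * ρ - 1) * f s) := by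
  have hΓρ : 0 < Real.Gamma ρ := Real.Gamma_pos_of_pos hρ
  intro n
  induction n with
  | zero =>
    intro t ht
    have h0 := key_step ρ κ c₁ f hρ hκ hc₁ hf_nonneg hf t ht
    calc ENNReal.ofReal (f t) ≤ ENNReal.ofReal c₁ +
          ENNReal.ofReal κ * ∫⁻ s in Set.Ioo 0 t, ENNReal.ofReal ((t - s) ^ (ρ - 1) * f s) := h0
      _ = _ := by
          rw [Finset.sum_range_one]
          norm_num
          rw [show κ * Real.Gamma ρ / Real.Gamma ρ = κ by
            rw [mul_div_assoc, div_self hΓρ.ne', mul_one]]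
  | succ n ih =>
    intro t ht
    set M : ℝ := (n : ℝ) + 1 with hM
    have hMpos : 0 < M := by positivity
    have hMρ : 0 < M * ρ := by positivity
    have hΓMρ : 0 < Real.Gamma (M * ρ) := Real.Gamma_pos_of_pos hMρ
    set e : ℝ := M * ρ - 1 with he
    set C : ℝ≥0∞ := ENNReal.ofReal c₁ with hC
    set K : ℝ≥0∞ := ENNReal.ofReal κ with hK
    set g : ℝ → ℝ≥0∞ := fun s => ENNReal.ofReal (f s) with hg
    -- remainder integral of step n
    set R : ℝ≥0∞ := ∫⁻ s in Set.Ioo 0 t, ENNReal.ofReal ((t - s) ^ e * f s) with hR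
    set J : ℝ → ℝ≥0∞ :=
      fun s => ∫⁻ u in Set.Ioo 0 s, ENNReal.ofReal ((s - u) ^ (ρ - 1) * f u) with hJ
    -- step 1: pointwise bound inside R
    have step1 : R ≤ ∫⁻ s in Set.Ioo 0 t,
        ENNReal.ofReal ((t - s) ^ e) * (C + K * J s) := by
      rw [hR]
      refine lintegral_mono_ae ((ae_restrict_iff' measurableSet_Ioo).2
        (Filter.Eventually.of_forall fun s hs => ?_))
      have h1 : (0:ℝ) ≤ (t - s) ^ e := Real.rpow_nonneg (by linarith [hs.2]) _
      rw [ENNReal.ofReal_mul h1]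
      exact mul_le_mul_right (key_step ρ κ c₁ f hρ hκ hc₁ hf_nonneg hf s hs.1) _
    -- split the integral
    have step2 : ∫⁻ s in Set.Ioo 0 t, ENNReal.ofReal ((t - s) ^ e) * (C + K * J s) =
        C * (∫⁻ s in Set.Ioo 0 t, ENNReal.ofReal ((t - s) ^ e)) +
        K * ∫⁻ s in Set.Ioo 0 t, ENNReal.ofReal ((t - s) ^ e) * J s := by
      have hker : Measurable (fun s : ℝ => ENNReal.ofReal ((t - s) ^ e)) := by fun_prop
      calc ∫⁻ s in Set.Ioo 0 t, ENNReal.ofReal ((t - s) ^ e) * (C + K * J s)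
          = ∫⁻ s in Set.Ioo 0 t,
              (ENNReal.ofReal ((t - s) ^ e) * C +
                K * (ENNReal.ofReal ((t - s) ^ e) * J s)) := by
            refine lintegral_congr fun s => ?_
            rw [mul_add]
            ring
        _ = (∫⁻ s in Set.Ioo 0 t, ENNReal.ofReal ((t - s) ^ e) * C) +
            ∫⁻ s in Set.Ioo 0 t, K * (ENNReal.ofReal ((t - s) ^ e) * J s) :=
            lintegral_add_left (hker.mul_const _) _
        _ = C * (∫⁻ s in Set.Ioo 0 t, ENNReal.ofReal ((t - s) ^ e)) +
            K * ∫⁻ s in Set.Ioo 0 t, ENNReal.ofReal ((t - s) ^ e) * J s := by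
            rw [lintegral_mul_const' C _ ENNReal.ofReal_ne_top,
              lintegral_const_mul' K _ ENNReal.ofReal_ne_top, mul_comm]
    -- step 3 : the first integral
    have step3 : ∫⁻ s in Set.Ioo 0 t, ENNReal.ofReal ((t - s) ^ e) =
        ENNReal.ofReal (Real.Gamma (M * ρ) * Real.Gamma 1 / Real.Gamma (M * ρ + 1) *
          (t - 0) ^ (M * ρ + 1 - 1)) := by
      rw [← conv_lintegral hMρ one_pos ht]
      refine lintegral_congr fun s => ?_
      rw [sub_zero, show (1:ℝ) - 1 = 0 by norm_num, Real.rpow_zero, mul_one]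
    -- step 4 : Fubini for the double term
    have step4 : ∫⁻ s in Set.Ioo 0 t, ENNReal.ofReal ((t - s) ^ e) * J s =
        ENNReal.ofReal (Real.Gamma (M * ρ) * Real.Gamma ρ / Real.Gamma (M * ρ + ρ)) *
          ∫⁻ u in Set.Ioo 0 t, ENNReal.ofReal ((t - u) ^ (M * ρ + ρ - 1) * f u) := by
      set Φ : ℝ × ℝ → ℝ≥0∞ := fun p =>
        ({q : ℝ × ℝ | 0 < q.2 ∧ q.2 < q.1}).indicator
          (fun q => ENNReal.ofReal ((q.1 - q.2) ^ (ρ - 1) * f q.2)) p with hΦ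
      have hSm : MeasurableSet {q : ℝ × ℝ | 0 < q.2 ∧ q.2 < q.1} :=
        (measurableSet_lt measurable_const measurable_snd).inter
          (measurableSet_lt measurable_snd measurable_fst)
      have hΦm : Measurable Φ := by
        apply Measurable.indicator _ hSm
        apply Measurable.ennreal_ofReal
        exact ((measurable_fst.sub measurable_snd).pow measurable_const).mul
          (hf_meas.comp measurable_snd)
      have hker : Measurable (fun s : ℝ => ENNReal.ofReal ((t - s) ^ e)) := by fun_prop
      have hΦ_pos : ∀ p : ℝ × ℝ, 0 < p.2 → p.2 < p.1 →
          Φ p = ENNReal.ofReal ((p.1 - p.2) ^ (ρ - 1) * f p.2) := by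
        intro p h1 h2
        simp only [hΦ]
        exact Set.indicator_of_mem
          (show p ∈ {q : ℝ × ℝ | 0 < q.2 ∧ q.2 < q.1} from ⟨h1, h2⟩) _
      have hΦ_zero : ∀ p : ℝ × ℝ, ¬(0 < p.2 ∧ p.2 < p.1) → Φ p = 0 := by
        intro p h
        simp only [hΦ]
        exact Set.indicator_of_notMem
          (show p ∉ {q : ℝ × ℝ | 0 < q.2 ∧ q.2 < q.1} from h) _
      have hB'0 : (0:ℝ) ≤ Real.Gamma (M * ρ) * Real.Gamma ρ / Real.Gamma (M * ρ + ρ) := by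
        have := Real.Gamma_pos_of_pos (show (0:ℝ) < M * ρ + ρ by positivity)
        positivity
      have hJeq : ∀ s : ℝ, J s = ∫⁻ u, Φ (s, u) := by
        intro s
        have hfe : (fun u => Φ (s, u)) =
            (Set.Ioo 0 s).indicator (fun u => ENNReal.ofReal ((s - u) ^ (ρ - 1) * f u)) := by
          funext u
          by_cases h : u ∈ Set.Ioo 0 s
          · rw [Set.indicator_of_mem h]
            exact hΦ_pos (s, u) h.1 h.2
          · rw [Set.indicator_of_notMem h]
            exact hΦ_zero (s, u) (by simpa [Set.mem_Ioo] using h)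
        rw [hJ]
        rw [hfe, lintegral_indicator measurableSet_Ioo]
      have hinner : ∀ u : ℝ, (∫⁻ s in Set.Ioo 0 t, ENNReal.ofReal ((t - s) ^ e) * Φ (s, u)) =
          (Set.Ioo 0 t).indicator (fun u =>
            ENNReal.ofReal (Real.Gamma (M * ρ) * Real.Gamma ρ / Real.Gamma (M * ρ + ρ)) *
              ENNReal.ofReal ((t - u) ^ (M * ρ + ρ - 1) * f u)) u := by
        intro u
        by_cases hu : u ∈ Set.Ioo 0 t
        · rw [Set.indicator_of_mem hu]
          have hfu : 0 ≤ f u := hf_nonneg u hu.1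
          have hfun : ∀ s : ℝ, ENNReal.ofReal ((t - s) ^ e) * Φ (s, u) =
              (Set.Ioi u).indicator (fun s => ENNReal.ofReal ((t - s) ^ e) *
                ENNReal.ofReal ((s - u) ^ (ρ - 1) * f u)) s := by
            intro s
            by_cases hs : u < s
            · rw [Set.indicator_of_mem (show s ∈ Set.Ioi u from hs),
                hΦ_pos (s, u) hu.1 hs]
            · rw [Set.indicator_of_notMem (show s ∉ Set.Ioi u from hs),
                hΦ_zero (s, u) (fun h => hs h.2), mul_zero]
          have hIoi : Set.Ioi u ∩ Set.Ioo 0 t = Set.Ioo u t := by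
            ext x
            simp only [Set.mem_inter_iff, Set.mem_Ioi, Set.mem_Ioo]
            constructor
            · rintro ⟨h1, _, h3⟩; exact ⟨h1, h3⟩
            · rintro ⟨h1, h2⟩; exact ⟨h1, hu.1.trans h1, h2⟩
          calc ∫⁻ s in Set.Ioo 0 t, ENNReal.ofReal ((t - s) ^ e) * Φ (s, u)
              = ∫⁻ s in Set.Ioo 0 t, (Set.Ioi u).indicator
                  (fun s => ENNReal.ofReal ((t - s) ^ e) *
                    ENNReal.ofReal ((s - u) ^ (ρ - 1) * f u)) s :=
                lintegral_congr fun s => hfun s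
            _ = ∫⁻ s in Set.Ioo u t, ENNReal.ofReal ((t - s) ^ e) *
                  ENNReal.ofReal ((s - u) ^ (ρ - 1) * f u) := by
                rw [lintegral_indicator measurableSet_Ioi,
                  Measure.restrict_restrict measurableSet_Ioi, hIoi]
            _ = ∫⁻ s in Set.Ioo u t, ENNReal.ofReal ((t - s) ^ e * (s - u) ^ (ρ - 1)) *
                  ENNReal.ofReal (f u) := by
                refine setLIntegral_congr_fun measurableSet_Ioo
                  (fun s hs => ?_)
                have h1 : (0:ℝ) ≤ (t - s) ^ e := Real.rpow_nonneg (by linarith [hs.2]) _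
                have h2 : (0:ℝ) ≤ (s - u) ^ (ρ - 1) :=
                  Real.rpow_nonneg (by linarith [hs.1]) _
                rw [ENNReal.ofReal_mul h2, ENNReal.ofReal_mul h1, ← mul_assoc]
            _ = (∫⁻ s in Set.Ioo u t, ENNReal.ofReal ((t - s) ^ e * (s - u) ^ (ρ - 1))) *
                  ENNReal.ofReal (f u) :=
                lintegral_mul_const' _ _ ENNReal.ofReal_ne_top
            _ = ENNReal.ofReal (Real.Gamma (M * ρ) * Real.Gamma ρ / Real.Gamma (M * ρ + ρ) *
                  (t - u) ^ (M * ρ + ρ - 1)) * ENNReal.ofReal (f u) := by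
                rw [he, conv_lintegral hMρ hρ hu.2]
            _ = ENNReal.ofReal (Real.Gamma (M * ρ) * Real.Gamma ρ / Real.Gamma (M * ρ + ρ)) *
                  ENNReal.ofReal ((t - u) ^ (M * ρ + ρ - 1) * f u) := by
                have h3 : (0:ℝ) ≤ (t - u) ^ (M * ρ + ρ - 1) :=
                  Real.rpow_nonneg (by linarith [hu.2]) _
                rw [ENNReal.ofReal_mul hB'0, ENNReal.ofReal_mul h3, mul_assoc]
        · rw [Set.indicator_of_notMem hu]
          have hz : ∀ s ∈ Set.Ioo 0 t, ENNReal.ofReal ((t - s) ^ e) * Φ (s, u) = 0 := by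
            intro s hs
            have : Φ (s, u) = 0 :=
              hΦ_zero (s, u) (fun hmem => hu ⟨hmem.1, hmem.2.trans hs.2⟩)
            rw [this, mul_zero]
          rw [setLIntegral_congr_fun measurableSet_Ioo hz,
            lintegral_zero]
      calc ∫⁻ s in Set.Ioo 0 t, ENNReal.ofReal ((t - s) ^ e) * J s
          = ∫⁻ s in Set.Ioo 0 t, ∫⁻ u, ENNReal.ofReal ((t - s) ^ e) * Φ (s, u) := by
            refine lintegral_congr fun s => ?_
            rw [hJeq s, lintegral_const_mul' _ _ ENNReal.ofReal_ne_top]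
        _ = ∫⁻ u, ∫⁻ s in Set.Ioo 0 t, ENNReal.ofReal ((t - s) ^ e) * Φ (s, u) := by
            refine lintegral_lintegral_swap ?_
            exact ((hker.comp measurable_fst).mul hΦm).aemeasurable
        _ = ∫⁻ u, (Set.Ioo 0 t).indicator (fun u =>
              ENNReal.ofReal (Real.Gamma (M * ρ) * Real.Gamma ρ / Real.Gamma (M * ρ + ρ)) *
                ENNReal.ofReal ((t - u) ^ (M * ρ + ρ - 1) * f u)) u :=
            lintegral_congr hinner
        _ = ∫⁻ u in Set.Ioo 0 t,
              ENNReal.ofReal (Real.Gamma (M * ρ) * Real.Gamma ρ / Real.Gamma (M * ρ + ρ)) *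
                ENNReal.ofReal ((t - u) ^ (M * ρ + ρ - 1) * f u) := by
            rw [lintegral_indicator measurableSet_Ioo]
        _ = ENNReal.ofReal (Real.Gamma (M * ρ) * Real.Gamma ρ / Real.Gamma (M * ρ + ρ)) *
              ∫⁻ u in Set.Ioo 0 t, ENNReal.ofReal ((t - u) ^ (M * ρ + ρ - 1) * f u) :=
            lintegral_const_mul' _ _ ENNReal.ofReal_ne_top
    -- assemble
    have hΓMρρ : 0 < Real.Gamma (M * ρ + ρ) :=
      Real.Gamma_pos_of_pos (by positivity)
    have hD0 : (0:ℝ) ≤ κ ^ (n + 1) * Real.Gamma ρ ^ (n + 1) / Real.Gamma (M * ρ) := by positivity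
    have hV10 : (0:ℝ) ≤ Real.Gamma (M * ρ) * Real.Gamma 1 / Real.Gamma (M * ρ + 1) *
        (t - 0) ^ (M * ρ + 1 - 1) := by
      have h1 : 0 < Real.Gamma (M * ρ + 1) := Real.Gamma_pos_of_pos (by positivity)
      have h2 : (0:ℝ) ≤ (t - 0) ^ (M * ρ + 1 - 1) := Real.rpow_nonneg (by linarith) _
      have h3 : (0:ℝ) < Real.Gamma 1 := by rw [Real.Gamma_one]; norm_num
      positivity
    have hB'0 : (0:ℝ) ≤ Real.Gamma (M * ρ) * Real.Gamma ρ / Real.Gamma (M * ρ + ρ) := by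
      positivity
    have hcast : ((n + 1 : ℕ) : ℝ) = M := by push_cast [hM]; ring
    have idA : (κ ^ (n + 1) * Real.Gamma ρ ^ (n + 1) / Real.Gamma (M * ρ)) *
        (Real.Gamma (M * ρ) * Real.Gamma 1 / Real.Gamma (M * ρ + 1) *
          (t - 0) ^ (M * ρ + 1 - 1)) =
        (Real.Gamma ρ * κ * t ^ ρ) ^ (n + 1) / Real.Gamma (((n + 1 : ℕ) : ℝ) * ρ + 1) := by
      rw [hcast, sub_zero, Real.Gamma_one, add_sub_cancel_right]
      have ht1 : t ^ (M * ρ) = (t ^ ρ) ^ (n + 1) := by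
        rw [hM, show ((n:ℝ) + 1) * ρ = ρ * ((n + 1 : ℕ) : ℝ) by push_cast; ring,
          Real.rpow_mul_natCast ht.le]
      rw [ht1]
      field_simp
      ring
    have idB : ENNReal.ofReal (κ ^ (n + 1) * Real.Gamma ρ ^ (n + 1) / Real.Gamma (M * ρ)) * K *
        ENNReal.ofReal (Real.Gamma (M * ρ) * Real.Gamma ρ / Real.Gamma (M * ρ + ρ)) =
        ENNReal.ofReal (κ ^ (n + 1 + 1) * Real.Gamma ρ ^ (n + 1 + 1) /
          Real.Gamma (M * ρ + ρ)) := by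
      have hB'0 : (0:ℝ) ≤ Real.Gamma (M * ρ) * Real.Gamma ρ / Real.Gamma (M * ρ + ρ) := by
        positivity
      rw [hK, ← ENNReal.ofReal_mul hD0, ← ENNReal.ofReal_mul (mul_nonneg hD0 hκ.le)]
      congr 1
      field_simp
      ring
    have hexp2 : ((↑(n + 1) : ℝ) + 1) * ρ = M * ρ + ρ := by push_cast [hM]; ring
    calc ENNReal.ofReal (f t)
        ≤ C * (∑ k ∈ Finset.range (n + 1),
            ENNReal.ofReal ((Real.Gamma ρ * κ * t ^ ρ) ^ k / Real.Gamma ((k : ℝ) * ρ + 1))) +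
          ENNReal.ofReal (κ ^ (n + 1) * Real.Gamma ρ ^ (n + 1) / Real.Gamma (M * ρ)) * R :=
          ih t ht
      _ ≤ C * (∑ k ∈ Finset.range (n + 1),
            ENNReal.ofReal ((Real.Gamma ρ * κ * t ^ ρ) ^ k / Real.Gamma ((k : ℝ) * ρ + 1))) +
          ENNReal.ofReal (κ ^ (n + 1) * Real.Gamma ρ ^ (n + 1) / Real.Gamma (M * ρ)) *
            ∫⁻ s in Set.Ioo 0 t, ENNReal.ofReal ((t - s) ^ e) * (C + K * J s) :=
          add_le_add_right (mul_le_mul_right step1 _) _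
      _ = _ := by
          rw [step2, step3, step4, hexp2]
          conv_rhs => rw [Finset.sum_range_succ, mul_add C]
          rw [add_assoc, mul_add]
          congr 1
          rw [mul_left_comm, ← ENNReal.ofReal_mul hD0, idA, ← mul_assoc, ← mul_assoc, idB]

end Iterate

/-- If `ρ > 0`, `κ > 0`, `c₁ > 0` and `f` is a nonnegative measurable locally integrable
function on `(0,∞)` with `f t ≤ c₁ + κ ∫₀^t (t-s)^{ρ-1} f s ds` for all `t > 0`, then
`f t ≤ c₁ * ∑_{k=0}^∞ (Γ(ρ) κ t^ρ)^k / Γ(kρ + 1)` for all `t > 0`. -/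
theorem renewal_iteration_upper (ρ κ c₁ : ℝ) (hρ : 0 < ρ) (hκ : 0 < κ) (hc₁ : 0 < c₁)
    (f : ℝ → ℝ)
    (hf_meas : Measurable f)
    (hf_nonneg : ∀ t, 0 < t → 0 ≤ f t)
    (hf_loc : LocallyIntegrableOn f (Set.Ioi 0))
    (hf : ∀ t, 0 < t → f t ≤ c₁ + κ * ∫ s in Set.Ioo 0 t, (t - s) ^ (ρ - 1) * f s) :
    ∀ t, 0 < t →
      f t ≤ c₁ * ∑' k : ℕ, (Real.Gamma ρ * κ * t ^ ρ) ^ k / Real.Gamma ((k : ℝ) * ρ + 1) := by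
  intro t ht
  have hΓρ : 0 < Real.Gamma ρ := Real.Gamma_pos_of_pos hρ
  set c : ℝ := Real.Gamma ρ * κ * t ^ ρ with hc
  have hc0 : 0 < c := by
    have := Real.rpow_pos_of_pos ht ρ
    positivity
  set a : ℕ → ℝ := fun k => c ^ k / Real.Gamma ((k : ℝ) * ρ + 1) with ha
  have ha_nonneg : ∀ k, 0 ≤ a k := by
    intro k
    have h1 : 0 < Real.Gamma ((k : ℝ) * ρ + 1) := Real.Gamma_pos_of_pos (by positivity)
    positivity
  have hsummable : Summable a := by
    obtain ⟨B, hB0, hBle⟩ := ml_geom_bound ρ c hρ hc0.le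
    exact Summable.of_nonneg_of_le ha_nonneg hBle
      ((summable_geometric_of_lt_one (by norm_num) (by norm_num)).mul_left B)
  set S : ℝ := ∑' k, a k with hS
  have hS1 : 1 ≤ S := by
    have h0 : a 0 = 1 := by
      rw [ha]
      norm_num
    calc (1:ℝ) = a 0 := h0.symm
      _ ≤ S := Summable.le_tsum hsummable 0 fun j _ => ha_nonneg j
  have hS0 : 0 ≤ S := by linarith
  by_cases hInt : IntegrableOn (fun s => (t - s) ^ (ρ - 1) * f s) (Set.Ioo 0 t)
  swap
  · have h1 : f t ≤ c₁ := by
      have := hf t ht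
      rw [integral_undef hInt] at this
      linarith
    calc f t ≤ c₁ := h1
      _ ≤ c₁ * S := le_mul_of_one_le_right hc₁.le hS1
  · -- integrable case
    have hnn : 0 ≤ᵐ[volume.restrict (Set.Ioo 0 t)] fun s => (t - s) ^ (ρ - 1) * f s := by
      filter_upwards [ae_restrict_mem measurableSet_Ioo] with s hs
      exact mul_nonneg (Real.rpow_nonneg (by linarith [hs.2]) _) (hf_nonneg s hs.1)
    set I : ℝ≥0∞ := ∫⁻ s in Set.Ioo 0 t, ENNReal.ofReal ((t - s) ^ (ρ - 1) * f s) with hI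
    have hItop : I ≠ ⊤ := by
      rw [hI, ← ofReal_integral_eq_lintegral_ofReal hInt hnn]
      exact ENNReal.ofReal_ne_top
    set ε : ℕ → ℝ := fun n =>
      κ ^ (n + 1) * Real.Gamma ρ ^ (n + 1) / Real.Gamma (((n : ℝ) + 1) * ρ) *
        t ^ ((n : ℝ) * ρ) with hε
    have hε0 : ∀ n, 0 ≤ ε n := by
      intro n
      have h1 : 0 < Real.Gamma (((n : ℝ) + 1) * ρ) := Real.Gamma_pos_of_pos (by positivity)
      have h2 : 0 < t ^ ((n : ℝ) * ρ) := Real.rpow_pos_of_pos ht _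
      positivity
    -- main chain of inequalities
    have hmain : ∀ n : ℕ, ENNReal.ofReal (f t) ≤
        ENNReal.ofReal (c₁ * S) + ENNReal.ofReal (ε n) * I := by
      intro n
      refine le_trans (iterate_bound ρ κ c₁ f hρ hκ hc₁ hf_meas hf_nonneg hf n t ht) ?_
      have hb1 : ENNReal.ofReal c₁ *
          (∑ k ∈ Finset.range (n + 1), ENNReal.ofReal (a k)) ≤ ENNReal.ofReal (c₁ * S) := by
        rw [ENNReal.ofReal_mul hc₁.le]
        refine mul_le_mul_right ?_ _
        rw [← ENNReal.ofReal_sum_of_nonneg fun i _ => ha_nonneg i]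
        exact ENNReal.ofReal_le_ofReal (Summable.sum_le_tsum _ (fun i _ => ha_nonneg i) hsummable)
      have hb2 : (∫⁻ s in Set.Ioo 0 t,
            ENNReal.ofReal ((t - s) ^ (((n : ℝ) + 1) * ρ - 1) * f s)) ≤
          ENNReal.ofReal (t ^ ((n : ℝ) * ρ)) * I := by
        rw [hI, ← lintegral_const_mul' _ _ ENNReal.ofReal_ne_top]
        refine lintegral_mono_ae ((ae_restrict_iff' measurableSet_Ioo).2
          (Filter.Eventually.of_forall fun s hs => ?_))
        have h2 : (0:ℝ) < t - s := by linarith [hs.2]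
        have h3 : (t - s) ^ (((n : ℝ) + 1) * ρ - 1) =
            (t - s) ^ ((n : ℝ) * ρ) * (t - s) ^ (ρ - 1) := by
          rw [← Real.rpow_add h2]
          ring_nf
        have h4 : (t - s) ^ ((n : ℝ) * ρ) ≤ t ^ ((n : ℝ) * ρ) :=
          Real.rpow_le_rpow h2.le (by linarith [hs.1]) (by positivity)
        rw [← ENNReal.ofReal_mul (Real.rpow_nonneg ht.le _)]
        apply ENNReal.ofReal_le_ofReal
        rw [h3, mul_assoc]
        exact mul_le_mul_of_nonneg_right h4
          (mul_nonneg (Real.rpow_nonneg h2.le _) (hf_nonneg s hs.1))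
      calc ENNReal.ofReal c₁ * (∑ k ∈ Finset.range (n + 1), ENNReal.ofReal (a k)) +
            ENNReal.ofReal (κ ^ (n + 1) * Real.Gamma ρ ^ (n + 1) /
              Real.Gamma (((n : ℝ) + 1) * ρ)) *
              ∫⁻ s in Set.Ioo 0 t, ENNReal.ofReal ((t - s) ^ (((n : ℝ) + 1) * ρ - 1) * f s)
          ≤ ENNReal.ofReal (c₁ * S) +
            ENNReal.ofReal (κ ^ (n + 1) * Real.Gamma ρ ^ (n + 1) /
              Real.Gamma (((n : ℝ) + 1) * ρ)) *
              (ENNReal.ofReal (t ^ ((n : ℝ) * ρ)) * I) :=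
            add_le_add hb1 (mul_le_mul_right hb2 _)
        _ = ENNReal.ofReal (c₁ * S) + ENNReal.ofReal (ε n) * I := by
            have hD0 : (0:ℝ) ≤ κ ^ (n + 1) * Real.Gamma ρ ^ (n + 1) /
                Real.Gamma (((n : ℝ) + 1) * ρ) := by
              have h1 : 0 < Real.Gamma (((n : ℝ) + 1) * ρ) :=
                Real.Gamma_pos_of_pos (by positivity)
              positivity
            rw [hε, ← mul_assoc, ← ENNReal.ofReal_mul hD0]
    -- limit of the error term
    have htend : Filter.Tendsto (fun n => ENNReal.ofReal (ε n) * I)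
        Filter.atTop (nhds 0) := by
      obtain ⟨B2, hB20, hB2⟩ := ml_geom_bound ρ (2 * c) hρ (by positivity)
      have htρ : (0:ℝ) < t ^ (-ρ) := Real.rpow_pos_of_pos ht _
      have key : ∀ n : ℕ, ε n ≤ B2 * ρ * t ^ (-ρ) * (((n : ℝ) + 1) * (1 / 4) ^ (n + 1)) := by
        intro n
        have hMρ : 0 < ((n : ℝ) + 1) * ρ := by positivity
        have hΓM : 0 < Real.Gamma (((n : ℝ) + 1) * ρ) := Real.Gamma_pos_of_pos hMρ
        have hΓM1 : Real.Gamma (((n : ℝ) + 1) * ρ + 1) =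
            ((n : ℝ) + 1) * ρ * Real.Gamma (((n : ℝ) + 1) * ρ) :=
          Real.Gamma_add_one hMρ.ne'
        have hΓM1pos : 0 < Real.Gamma (((n : ℝ) + 1) * ρ + 1) := by rw [hΓM1]; positivity
        have hcast : ((n + 1 : ℕ) : ℝ) = (n : ℝ) + 1 := by push_cast; ring
        have e3 : c ^ (n + 1) =
            κ ^ (n + 1) * Real.Gamma ρ ^ (n + 1) * t ^ (ρ * ((n : ℝ) + 1)) := by
          rw [hc, show ρ * ((n : ℝ) + 1) = ρ * ((n + 1 : ℕ) : ℝ) by rw [hcast],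
            Real.rpow_mul_natCast ht.le]
          ring
        have e2 : t ^ ((n : ℝ) * ρ) = t ^ (ρ * ((n : ℝ) + 1)) * t ^ (-ρ) := by
          rw [← Real.rpow_add ht]
          congr 1
          ring
        have eε : ε n = c ^ (n + 1) / Real.Gamma (((n : ℝ) + 1) * ρ + 1) *
            (((n : ℝ) + 1) * ρ) * t ^ (-ρ) := by
          simp only [hε]
          rw [e2, e3, hΓM1]
          field_simp
        have hbound : c ^ (n + 1) / Real.Gamma (((n : ℝ) + 1) * ρ + 1) ≤
            B2 * (1 / 4) ^ (n + 1) := by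
          have h1 := hB2 (n + 1)
          rw [hcast, mul_pow] at h1
          have h3 : c ^ (n + 1) / Real.Gamma (((n : ℝ) + 1) * ρ + 1) =
              2 ^ (n + 1) * c ^ (n + 1) / Real.Gamma (((n : ℝ) + 1) * ρ + 1) / 2 ^ (n + 1) := by
            field_simp
          rw [h3]
          calc 2 ^ (n + 1) * c ^ (n + 1) / Real.Gamma (((n : ℝ) + 1) * ρ + 1) / 2 ^ (n + 1)
              ≤ B2 * (1 / 2) ^ (n + 1) / 2 ^ (n + 1) := by gcongr
            _ = B2 * (1 / 4) ^ (n + 1) := by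
                rw [div_eq_mul_inv, ← inv_pow, mul_assoc, ← mul_pow]
                norm_num
        calc ε n = c ^ (n + 1) / Real.Gamma (((n : ℝ) + 1) * ρ + 1) *
              (((n : ℝ) + 1) * ρ) * t ^ (-ρ) := eε
          _ ≤ B2 * (1 / 4) ^ (n + 1) * (((n : ℝ) + 1) * ρ) * t ^ (-ρ) := by
              apply mul_le_mul_of_nonneg_right _ htρ.le
              exact mul_le_mul_of_nonneg_right hbound hMρ.le
          _ = B2 * ρ * t ^ (-ρ) * (((n : ℝ) + 1) * (1 / 4) ^ (n + 1)) := by ring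
      have t1 : Filter.Tendsto (fun n : ℕ => ((n : ℝ) + 1) * (1 / 4 : ℝ) ^ (n + 1))
          Filter.atTop (nhds 0) := by
        have hs : Summable (fun n : ℕ => (n : ℝ) ^ 1 * (1 / 4 : ℝ) ^ n) :=
          summable_pow_mul_geometric_of_norm_lt_one 1 (by norm_num)
        have h0 := hs.tendsto_atTop_zero
        have h1 := h0.comp (Filter.tendsto_add_atTop_nat 1)
        refine h1.congr fun n => ?_
        simp [Function.comp]
      have εtend : Filter.Tendsto ε Filter.atTop (nhds 0) := by
        refine squeeze_zero hε0 key ?_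
        have := t1.const_mul (B2 * ρ * t ^ (-ρ))
        simpa using this
      have h2 : Filter.Tendsto (fun n => ENNReal.ofReal (ε n)) Filter.atTop (nhds 0) := by
        have := ENNReal.tendsto_ofReal εtend
        simpa using this
      have h3 := ENNReal.Tendsto.mul_const h2 (Or.inr hItop)
      simpa using h3
    have hlast : ENNReal.ofReal (f t) ≤ ENNReal.ofReal (c₁ * S) := by
      have h2 : Filter.Tendsto (fun n => ENNReal.ofReal (c₁ * S) + ENNReal.ofReal (ε n) * I)
          Filter.atTop (nhds (ENNReal.ofReal (c₁ * S))) := by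
        have := Filter.Tendsto.const_add (ENNReal.ofReal (c₁ * S)) htend
        simpa using this
      exact ge_of_tendsto' h2 hmain
    have := (ENNReal.ofReal_le_ofReal_iff (mul_nonneg hc₁.le hS0)).1 hlast
    exact this
end

section
/- Let d ≥ 1 be an integer, let α ∈ (1, 2], and let c > 0. Suppose p : (0, ∞) × ℝ^d × ℝ^d → [0, ∞) is a kernel satisfying the lower heat-kernel bound p_t(x, y) ≥ c · min(t^{−d/α}, t / |x − y|^{d+α}) for all t > 0 and x, y ∈ ℝ^d. Let u₀ : ℝ^d → [0, ∞) be a bounded measurable function and suppose there is a bounded measurable set A ⊂ ℝ^d with ∫_A u₀(x) dx > 0. Then there exist T > 0 and a constant c₁ > 0 such that for all t > T and all x ∈ ℝ^d with |x| ≤ t^{1/α}, one has ∫_{ℝ^d} p_t(x, y) u₀(y) dy ≥ c₁ · t^{−d/α}. -/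
open MeasureTheory

/-- Lower bound on the linear part of the solution: if the kernel `p` satisfies the
lower heat-kernel bound `p t x y ≥ c * min (t^{-d/α}) (t / |x-y|^{d+α})` and the bounded
nonnegative initial condition `u₀` has positive integral over a bounded set `A`, then
there exist `T > 0` and `c₁ > 0` such that `∫ p t x y * u₀ y dy ≥ c₁ * t^{-d/α}`
for all `t > T` and all `x` with `|x| ≤ t^{1/α}`. -/
theorem linear_part_lower_bound (d : ℕ) (hd : 1 ≤ d) (α : ℝ) (hα1 : 1 < α) (hα2 : α ≤ 2)
    (c : ℝ) (hc : 0 < c)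
    (p : ℝ → EuclideanSpace ℝ (Fin d) → EuclideanSpace ℝ (Fin d) → ℝ)
    (hp_nonneg : ∀ t, 0 < t → ∀ x y, 0 ≤ p t x y)
    (hp_meas : ∀ t, 0 < t → ∀ x, Measurable (fun y => p t x y))
    (hp_lb : ∀ t, 0 < t → ∀ x y,
      c * min (t ^ (-(d : ℝ) / α)) (t / ‖x - y‖ ^ ((d : ℝ) + α)) ≤ p t x y)
    (u₀ : EuclideanSpace ℝ (Fin d) → ℝ)
    (hu₀_meas : Measurable u₀) (hu₀_nonneg : ∀ x, 0 ≤ u₀ x)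
    (M : ℝ) (hu₀_bdd : ∀ x, u₀ x ≤ M)
    (A : Set (EuclideanSpace ℝ (Fin d))) (hA_meas : MeasurableSet A)
    (hA_bdd : Bornology.IsBounded A) (hA_pos : 0 < ∫ x in A, u₀ x)
    (h_int : ∀ t, 0 < t → ∀ x, Integrable (fun y => p t x y * u₀ y)) :
    ∃ T > 0, ∃ c₁ > 0, ∀ t, T < t → ∀ x : EuclideanSpace ℝ (Fin d), ‖x‖ ≤ t ^ (1 / α) →
      c₁ * t ^ (-(d : ℝ) / α) ≤ ∫ y, p t x y * u₀ y := by
  haveI : Nontrivial (EuclideanSpace ℝ (Fin d)) := by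
    have : Nonempty (Fin d) := ⟨⟨0, hd⟩⟩
    infer_instance
  have hα0 : 0 < α := by linarith
  have hdα : 0 < (d : ℝ) + α := by positivity
  obtain ⟨R, hR1, hRA⟩ := hA_bdd.subset_closedBall_lt 1 0
  have hR0 : 0 < R := by linarith
  set K : ℝ := (2 : ℝ) ^ ((d : ℝ) + α) with hK
  have hK0 : 0 < K := Real.rpow_pos_of_pos two_pos _
  have hK1 : 1 ≤ K := Real.one_le_rpow one_le_two hdα.le
  -- integrability of u₀ on A
  have hu₀_int : IntegrableOn u₀ A := by
    apply Measure.integrableOn_of_bounded hA_bdd.measure_lt_top.ne hu₀_meas.aestronglyMeasurable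
    filter_upwards with z
    rw [Real.norm_eq_abs, abs_le]
    exact ⟨by linarith [hu₀_nonneg z, hu₀_bdd z], hu₀_bdd z⟩
  refine ⟨R ^ α, Real.rpow_pos_of_pos hR0 α, c * K⁻¹ * ∫ x in A, u₀ x, by positivity,
    fun t ht x hx => ?_⟩
  have ht0 : 0 < t := lt_trans (Real.rpow_pos_of_pos hR0 α) ht
  have hRt : R ≤ t ^ (1 / α) := by
    have h1 : (R ^ α) ^ (1 / α) ≤ t ^ (1 / α) :=
      Real.rpow_le_rpow (by positivity) ht.le (by positivity)
    rwa [← Real.rpow_mul hR0.le, mul_one_div, div_self hα0.ne', Real.rpow_one] at h1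
  set C : ℝ := c * K⁻¹ * t ^ (-(d : ℝ) / α) with hC
  have hC0 : 0 < C := by positivity
  -- pointwise bound on A \ {x}
  have hpt : ∀ y ∈ A, y ≠ x → C * u₀ y ≤ p t x y * u₀ y := by
    intro y hy hyx
    have hxy0 : 0 < ‖x - y‖ := by
      exact norm_sub_pos_iff.mpr (fun h => hyx h.symm)
    have hyR : ‖y‖ ≤ R := by
      have := hRA hy
      simpa [Metric.mem_closedBall, dist_zero_right] using this
    have hxy2 : ‖x - y‖ ≤ 2 * t ^ (1 / α) := by
      calc ‖x - y‖ ≤ ‖x‖ + ‖y‖ := norm_sub_le x y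
        _ ≤ t ^ (1 / α) + t ^ (1 / α) := add_le_add hx (hyR.trans hRt)
        _ = 2 * t ^ (1 / α) := by ring
    have hmin : K⁻¹ * t ^ (-(d : ℝ) / α) ≤
        min (t ^ (-(d : ℝ) / α)) (t / ‖x - y‖ ^ ((d : ℝ) + α)) := by
      have hfirst : K⁻¹ * t ^ (-(d : ℝ) / α) ≤ t ^ (-(d : ℝ) / α) := by
        have : K⁻¹ ≤ 1 := inv_le_one_of_one_le₀ hK1
        nlinarith [Real.rpow_pos_of_pos ht0 (-(d : ℝ) / α)]
      have hsecond : K⁻¹ * t ^ (-(d : ℝ) / α) ≤ t / ‖x - y‖ ^ ((d : ℝ) + α) := by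
        have hpow : ‖x - y‖ ^ ((d : ℝ) + α) ≤ K * t ^ (((d : ℝ) + α) / α) := by
          have h1 : ‖x - y‖ ^ ((d : ℝ) + α) ≤ (2 * t ^ (1 / α)) ^ ((d : ℝ) + α) :=
            Real.rpow_le_rpow hxy0.le hxy2 hdα.le
          rw [Real.mul_rpow (by norm_num) (by positivity),
            ← Real.rpow_mul ht0.le] at h1
          refine h1.trans (le_of_eq ?_)
          rw [hK]
          congr 1
          field_simp
        have hpow0 : 0 < ‖x - y‖ ^ ((d : ℝ) + α) := Real.rpow_pos_of_pos hxy0 _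
        have h2 : t / (K * t ^ (((d : ℝ) + α) / α)) ≤ t / ‖x - y‖ ^ ((d : ℝ) + α) :=
          div_le_div_of_nonneg_left ht0.le hpow0 hpow
        have hmul : t ^ (-(d : ℝ) / α) * t ^ (((d : ℝ) + α) / α) = t := by
          rw [← Real.rpow_add ht0,
            show -(d : ℝ) / α + ((d : ℝ) + α) / α = 1 by field_simp; ring, Real.rpow_one]
        have h3 : t / (K * t ^ (((d : ℝ) + α) / α)) = K⁻¹ * t ^ (-(d : ℝ) / α) := by
          rw [div_eq_iff (by positivity),
            show K⁻¹ * t ^ (-(d : ℝ) / α) * (K * t ^ (((d : ℝ) + α) / α)) =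
              (K⁻¹ * K) * (t ^ (-(d : ℝ) / α) * t ^ (((d : ℝ) + α) / α)) by ring,
            inv_mul_cancel₀ hK0.ne', one_mul, hmul]
        rw [← h3]; exact h2
      exact le_min hfirst hsecond
    have := hp_lb t ht0 x y
    have hple : C ≤ p t x y := by
      calc C = c * (K⁻¹ * t ^ (-(d : ℝ) / α)) := by rw [hC]; ring
        _ ≤ c * min (t ^ (-(d : ℝ) / α)) (t / ‖x - y‖ ^ ((d : ℝ) + α)) :=
            mul_le_mul_of_nonneg_left hmin hc.le
        _ ≤ p t x y := this
    exact mul_le_mul_of_nonneg_right hple (hu₀_nonneg y)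
  -- integral comparison
  have h1 : ∫ y in A, C * u₀ y ≤ ∫ y in A, p t x y * u₀ y := by
    apply setIntegral_mono_ae_restrict (hu₀_int.const_mul C) ((h_int t ht0 x).integrableOn)
    rw [Filter.EventuallyLE, ae_restrict_iff' hA_meas]
    have hns : (volume : Measure (EuclideanSpace ℝ (Fin d))) {x} = 0 := measure_singleton x
    filter_upwards [measure_eq_zero_iff_ae_notMem.mp hns] with y hy hyA
    exact hpt y hyA (by simpa using hy)
  have h2 : ∫ y in A, p t x y * u₀ y ≤ ∫ y, p t x y * u₀ y := by
    apply setIntegral_le_integral (h_int t ht0 x)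
    filter_upwards with y
    exact mul_nonneg (hp_nonneg t ht0 x y) (hu₀_nonneg y)
  have h3 : ∫ y in A, C * u₀ y = C * ∫ y in A, u₀ y := integral_const_mul C u₀
  calc c * K⁻¹ * (∫ x in A, u₀ x) * t ^ (-(d : ℝ) / α)
      = C * ∫ y in A, u₀ y := by rw [hC]; ring
    _ = ∫ y in A, C * u₀ y := h3.symm
    _ ≤ ∫ y in A, p t x y * u₀ y := h1
    _ ≤ ∫ y, p t x y * u₀ y := h2
end

section
/- Let d ≥ 1 be an integer, let α ∈ (1, 2], let β satisfy 0 < β < min(α, d), let t > 0, and let q ∈ (0, (α − β)/(2α)). Then there exists a constant c₁ > 0 (which may depend on t, α, β, d, q) such that for every h ∈ (0, 1), ∫₀^t ∫_{ℝ^d} (e^{−(t − s + h)|ξ|^α} − e^{−(t − s)|ξ|^α})² · |ξ|^{β − d} dξ ds ≤ c₁ · h^{2q}. -/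
open MeasureTheory
open scoped ENNReal

section Aux

open Metric Set MeasureTheory MeasureTheory.Measure

/-- Polar-coordinates formula for the Lebesgue (lower) integral of a radial function
with respect to an additive Haar measure. -/
lemma my_lintegral_fun_norm_addHaar {E : Type*} [NormedAddCommGroup E] [NormedSpace ℝ E]
    [MeasurableSpace E] [BorelSpace E] [FiniteDimensional ℝ E] [Nontrivial E]
    (μ : Measure E) [μ.IsAddHaarMeasure] (f : ℝ → ℝ≥0∞) (hf : Measurable f) :
    ∫⁻ x, f ‖x‖ ∂μ = (Module.finrank ℝ E) * μ (ball 0 1) *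
      ∫⁻ y in Ioi (0:ℝ), ENNReal.ofReal (y ^ (Module.finrank ℝ E - 1)) * f y := by
  have h1 : ∫⁻ x, f ‖x‖ ∂μ
      = ∫⁻ x : ({(0:E)}ᶜ : Set E), f ‖(x : E)‖ ∂(μ.comap (↑)) := by
    rw [lintegral_subtype_comap (measurableSet_singleton (0:E)).compl
      (fun x : E => f ‖x‖), MeasureTheory.restrict_compl_singleton]
  have h2 : ∫⁻ x : ({(0:E)}ᶜ : Set E), f ‖(x : E)‖ ∂(μ.comap (↑))
      = ∫⁻ p : sphere (0:E) 1 × Ioi (0:ℝ), f p.2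
          ∂(μ.toSphere.prod (volumeIoiPow (Module.finrank ℝ E - 1))) := by
    rw [← (μ.measurePreserving_homeomorphUnitSphereProd).lintegral_comp_emb
      (Homeomorph.measurableEmbedding _) (fun p : sphere (0:E) 1 × Ioi (0:ℝ) => f p.2)]
    simp
  have hmeas : Measurable fun p : sphere (0:E) 1 × Ioi (0:ℝ) => f (p.2 : ℝ) :=
    hf.comp (measurable_subtype_coe.comp measurable_snd)
  have h3 : ∫⁻ p : sphere (0:E) 1 × Ioi (0:ℝ), f p.2
          ∂(μ.toSphere.prod (volumeIoiPow (Module.finrank ℝ E - 1)))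
      = μ.toSphere univ * ∫⁻ y : Ioi (0:ℝ), f y
          ∂(volumeIoiPow (Module.finrank ℝ E - 1)) := by
    rw [lintegral_prod _ hmeas.aemeasurable]
    simp [mul_comm]
  have h4 : ∫⁻ y : Ioi (0:ℝ), f y ∂(volumeIoiPow (Module.finrank ℝ E - 1))
      = ∫⁻ y in Ioi (0:ℝ),
          ENNReal.ofReal (y ^ (Module.finrank ℝ E - 1)) * f y := by
    rw [Measure.volumeIoiPow, lintegral_withDensity_eq_lintegral_mul _
      (show Measurable fun r : Ioi (0:ℝ) =>
        ENNReal.ofReal ((r : ℝ) ^ (Module.finrank ℝ E - 1)) from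
        (measurable_subtype_coe.pow_const _).ennreal_ofReal)
      (show Measurable fun y : Ioi (0:ℝ) => f (y : ℝ) from
        hf.comp measurable_subtype_coe)]
    exact lintegral_subtype_comap measurableSet_Ioi
      (fun y : ℝ => ENNReal.ofReal (y ^ (Module.finrank ℝ E - 1)) * f y)
  rw [h1, h2, h3, h4, Measure.toSphere_apply_univ, mul_assoc]

lemma one_sub_exp_neg_le_rpow {y q : ℝ} (hy : 0 ≤ y) (hq0 : 0 < q) (hq1 : q ≤ 1) :
    1 - Real.exp (-y) ≤ y ^ q := by
  rcases eq_or_lt_of_le hy with rfl | hy'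
  · simp [Real.zero_rpow hq0.ne']
  rcases le_or_gt y 1 with hy1 | hy1
  · have h1 : 1 - Real.exp (-y) ≤ y := by
      have := Real.add_one_le_exp (-y)
      linarith
    have h2 : y ^ (1:ℝ) ≤ y ^ q := Real.rpow_le_rpow_of_exponent_ge hy' hy1 hq1
    rw [Real.rpow_one] at h2
    linarith
  · have h1 : 1 - Real.exp (-y) ≤ 1 := by
      have := (Real.exp_pos (-y)).le
      linarith
    have h2 : (1:ℝ) ≤ y ^ q := Real.one_le_rpow hy1.le hq0.le
    linarith

lemma integral_le_of_lintegral_le {X : Type*} [MeasurableSpace X] {μ : Measure X}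
    {g : X → ℝ} {M : ℝ} (hM : 0 ≤ M) (hgs : ∀ x, 0 ≤ g x)
    (h : ∫⁻ x, ENNReal.ofReal (g x) ∂μ ≤ ENNReal.ofReal M) :
    ∫ x, g x ∂μ ≤ M := by
  by_cases hi : Integrable g μ
  · rw [integral_eq_lintegral_of_nonneg_ae (Filter.Eventually.of_forall hgs)
      hi.aestronglyMeasurable]
    calc (∫⁻ x, ENNReal.ofReal (g x) ∂μ).toReal
        ≤ (ENNReal.ofReal M).toReal := ENNReal.toReal_mono ENNReal.ofReal_ne_top h
      _ = M := ENNReal.toReal_ofReal hM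
  · rw [integral_undef hi]; exact hM

end Aux

set_option maxHeartbeats 1000000 in
/-- Temporal increment estimate for the Fourier transform of the fractional heat kernel:
for `q ∈ (0, (α-β)/(2α))` there is `c₁ > 0` such that for all `h ∈ (0,1)`,
`∫₀^t ∫_{ℝ^d} (e^{-(t-s+h)|ξ|^α} - e^{-(t-s)|ξ|^α})² |ξ|^{β-d} dξ ds ≤ c₁ h^{2q}`. -/
theorem heat_kernel_increment_estimate (d : ℕ) (hd : 1 ≤ d) (α β t q : ℝ)
    (hα1 : 1 < α) (hα2 : α ≤ 2) (hβ0 : 0 < β) (hβα : β < α) (hβd : β < (d : ℝ))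
    (ht : 0 < t) (hq0 : 0 < q) (hq1 : q < (α - β) / (2 * α)) :
    ∃ c₁ > 0, ∀ h : ℝ, 0 < h → h < 1 →
      (∫ s in Set.Ioo 0 t, ∫ ξ : EuclideanSpace ℝ (Fin d),
        (Real.exp (-((t - s + h) * ‖ξ‖ ^ α)) - Real.exp (-((t - s) * ‖ξ‖ ^ α))) ^ 2 *
          ‖ξ‖ ^ (β - (d : ℝ))) ≤ c₁ * h ^ (2 * q) := by
  classical
  haveI : Nonempty (Fin d) := Fin.pos_iff_nonempty.mp hd
  have hα0 : (0:ℝ) < α := by linarith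
  set p : ℝ := 2 * α * q + β with hpdef
  have hp0 : 0 < p := by positivity
  set γ : ℝ := p / α with hγdef
  have hγ0 : 0 < γ := div_pos hp0 hα0
  have hq1' : q * (2 * α) < α - β := (lt_div_iff₀ (by positivity : (0:ℝ) < 2 * α)).mp hq1
  have hγ1 : γ < 1 := by
    rw [hγdef, div_lt_one hα0]
    nlinarith
  have hq2 : 2 * q < 1 := by nlinarith
  set V : ℝ := (volume (Metric.ball (0 : EuclideanSpace ℝ (Fin d)) 1)).toReal with hVdef
  have hV0 : 0 ≤ V := ENNReal.toReal_nonneg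
  have hΓ0 : 0 < Real.Gamma γ := Real.Gamma_pos_of_pos hγ0
  set D : ℝ := (d : ℝ) * V * ((1 / α) * Real.Gamma γ) with hDdef
  have hD0 : 0 ≤ D := by positivity
  set I : ℝ := ∫ s in Set.Ioo 0 t, (t - s) ^ (-γ) with hIdef
  have hI0 : 0 ≤ I := by
    apply setIntegral_nonneg measurableSet_Ioo
    intro s hs
    exact Real.rpow_nonneg (by linarith [hs.2]) _
  have hIint : IntegrableOn (fun s : ℝ => (t - s) ^ (-γ)) (Set.Ioo 0 t) := by
    have h1 : IntervalIntegrable (fun u : ℝ => u ^ (-γ)) volume 0 t :=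
      intervalIntegral.intervalIntegrable_rpow' (by linarith)
    have h2 : IntervalIntegrable (fun s : ℝ => (t - s) ^ (-γ)) volume 0 t := by
      have h3 := h1.comp_sub_left t
      simpa using h3.symm
    exact ((intervalIntegrable_iff_integrableOn_Ioc_of_le ht.le).mp h2).mono_set
      Set.Ioo_subset_Ioc_self
  refine ⟨D * I + 1, by nlinarith, fun h h0 h1 => ?_⟩
  have hh2q : 0 < h ^ (2 * q) := Real.rpow_pos_of_pos h0 _
  -- the inner bound
  have key : ∀ s ∈ Set.Ioo (0:ℝ) t,
      (∫ ξ : EuclideanSpace ℝ (Fin d),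
        (Real.exp (-((t - s + h) * ‖ξ‖ ^ α)) - Real.exp (-((t - s) * ‖ξ‖ ^ α))) ^ 2 *
          ‖ξ‖ ^ (β - (d : ℝ)))
      ≤ h ^ (2 * q) * D * (t - s) ^ (-γ) := by
    intro s hs
    set a : ℝ := t - s with hadef
    have ha0 : 0 < a := by simp only [hadef]; linarith [hs.2]
    set f : ℝ → ℝ := fun y => y ^ (p - (d:ℝ)) * Real.exp (-(a * y ^ α)) with hfdef
    have hf0 : ∀ y : ℝ, 0 ≤ y → 0 ≤ f y := fun y hy =>
      mul_nonneg (Real.rpow_nonneg hy _) (Real.exp_pos _).le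
    have hfm : Measurable fun y : ℝ => f y := by
      rw [hfdef]; fun_prop
    -- pointwise bound
    have hpt : ∀ ξ : EuclideanSpace ℝ (Fin d),
        (Real.exp (-((a + h) * ‖ξ‖ ^ α)) - Real.exp (-(a * ‖ξ‖ ^ α))) ^ 2 *
          ‖ξ‖ ^ (β - (d : ℝ)) ≤ h ^ (2 * q) * f ‖ξ‖ := by
      intro ξ
      set r : ℝ := ‖ξ‖ with hrdef
      have hr0 : 0 ≤ r := norm_nonneg _
      rcases eq_or_lt_of_le hr0 with hr | hr
      · have hβd' : β - (d:ℝ) ≠ 0 := by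
          intro hc; rw [sub_eq_zero] at hc; exact absurd hc hβd.ne
        rw [← hr, Real.zero_rpow hβd', mul_zero]
        exact mul_nonneg (Real.rpow_nonneg h0.le _) (hf0 _ le_rfl)
      · -- r > 0
        set x : ℝ := r ^ α with hxdef
        have hx0 : 0 < x := Real.rpow_pos_of_pos hr _
        have e2 : (Real.exp (-((a + h) * x)) - Real.exp (-(a * x))) ^ 2 =
            Real.exp (-(a * x)) ^ 2 * (1 - Real.exp (-(h * x))) ^ 2 := by
          rw [show -((a + h) * x) = -(a*x) + -(h*x) by ring, Real.exp_add]
          ring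
        have h3 : 0 ≤ 1 - Real.exp (-(h * x)) := by
          have : Real.exp (-(h * x)) ≤ 1 := by
            rw [Real.exp_le_one_iff]
            nlinarith
          linarith
        have h4 : 1 - Real.exp (-(h * x)) ≤ (h * x) ^ q :=
          one_sub_exp_neg_le_rpow (by positivity) hq0 (by linarith)
        have h5 : (1 - Real.exp (-(h * x))) ^ 2 ≤ (h * x) ^ (2 * q) := by
          calc (1 - Real.exp (-(h * x))) ^ 2
              = (1 - Real.exp (-(h * x))) * (1 - Real.exp (-(h * x))) := sq _
            _ ≤ (h * x) ^ q * (h * x) ^ q :=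
                mul_le_mul h4 h4 h3 (Real.rpow_nonneg (by positivity) _)
            _ = (h * x) ^ (2 * q) := by
                rw [← Real.rpow_add (by positivity)]; ring_nf
        have h6 : Real.exp (-(a * x)) ^ 2 ≤ Real.exp (-(a * x)) := by
          have hax : 0 ≤ a * x := by positivity
          have hle : Real.exp (-(a * x)) ≤ 1 := by
            rw [Real.exp_le_one_iff]; linarith
          nlinarith [Real.exp_pos (-(a * x))]
        have h7 : (Real.exp (-((a + h) * x)) - Real.exp (-(a * x))) ^ 2 ≤
            Real.exp (-(a * x)) * ((h * x) ^ (2 * q)) := by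
          rw [e2]
          exact mul_le_mul h6 h5 (sq_nonneg _) (Real.exp_pos _).le
        have h8 : (h * x) ^ (2 * q) = h ^ (2 * q) * r ^ (2 * α * q) := by
          rw [Real.mul_rpow h0.le hx0.le, hxdef, ← Real.rpow_mul hr0]
          ring_nf
        have h9 : r ^ (2 * α * q) * r ^ (β - (d:ℝ)) = r ^ (p - (d:ℝ)) := by
          rw [← Real.rpow_add hr, hpdef]
          ring_nf
        calc (Real.exp (-((a + h) * x)) - Real.exp (-(a * x))) ^ 2 * r ^ (β - (d:ℝ))
            ≤ (Real.exp (-(a * x)) * ((h * x) ^ (2 * q))) * r ^ (β - (d:ℝ)) :=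
              mul_le_mul_of_nonneg_right h7 (Real.rpow_nonneg hr0 _)
          _ = h ^ (2 * q) * (r ^ (2 * α * q) * r ^ (β - (d:ℝ)) * Real.exp (-(a * x))) := by
              rw [h8]; ring
          _ = h ^ (2 * q) * f r := by rw [h9, hfdef]
    have hM0 : (0:ℝ) ≤ h ^ (2 * q) * D * a ^ (-γ) := mul_nonneg (mul_nonneg hh2q.le hD0) (Real.rpow_nonneg ha0.le _)
    apply integral_le_of_lintegral_le hM0
      (fun ξ => mul_nonneg (sq_nonneg _) (Real.rpow_nonneg (norm_nonneg _) _))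
    have hfm' : Measurable fun ξ : EuclideanSpace ℝ (Fin d) =>
        ENNReal.ofReal (f ‖ξ‖) := (hfm.comp measurable_norm).ennreal_ofReal
    have hint : IntegrableOn (fun y : ℝ => y ^ (p - 1) * Real.exp (-(a * y ^ α)))
        (Set.Ioi 0) := by
      have := integrableOn_rpow_mul_exp_neg_mul_rpow
        (show (-1:ℝ) < p - 1 by linarith) hα0 ha0
      simpa [neg_mul] using this
    have hIoi : ∫⁻ y in Set.Ioi (0:ℝ), ENNReal.ofReal (y ^ (d - 1)) * ENNReal.ofReal (f y)
        = ENNReal.ofReal (a ^ (-γ) * (1 / α) * Real.Gamma γ) := by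
      have e1 : ∀ᵐ y ∂volume, y ∈ Set.Ioi (0:ℝ) →
          ENNReal.ofReal (y ^ (d - 1)) * ENNReal.ofReal (f y)
          = ENNReal.ofReal (y ^ (p - 1) * Real.exp (-(a * y ^ α))) := by
        refine Filter.Eventually.of_forall fun y hy => ?_
        have hy0 : (0:ℝ) < y := hy
        rw [← ENNReal.ofReal_mul (pow_nonneg hy0.le _)]
        congr 1
        rw [hfdef, ← mul_assoc]
        congr 1
        rw [← Real.rpow_natCast y (d - 1), ← Real.rpow_add hy0]
        congr 1
        have hcast : ((d - 1 : ℕ) : ℝ) = (d:ℝ) - 1 := by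
          push_cast [Nat.cast_sub hd]; ring
        rw [hcast]; ring
      rw [setLIntegral_congr_fun_ae measurableSet_Ioi e1,
        ← ofReal_integral_eq_lintegral_ofReal hint
          ((ae_restrict_iff' measurableSet_Ioi).mpr (Filter.Eventually.of_forall
            fun y hy => mul_nonneg (Real.rpow_nonneg (le_of_lt hy) _) (Real.exp_pos _).le))]
      congr 1
      have hval := integral_rpow_mul_exp_neg_mul_rpow hα0
        (show (-1:ℝ) < p - 1 by linarith) ha0
      simp only [neg_mul] at hval ⊢
      rw [hval]
      rw [show p - 1 + 1 = p by ring, show -p / α = -γ by rw [hγdef]; ring,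
        show p / α = γ by rw [hγdef]]
    calc ∫⁻ ξ : EuclideanSpace ℝ (Fin d),
          ENNReal.ofReal ((Real.exp (-((a + h) * ‖ξ‖ ^ α)) - Real.exp (-(a * ‖ξ‖ ^ α))) ^ 2 *
            ‖ξ‖ ^ (β - (d : ℝ)))
        ≤ ∫⁻ ξ : EuclideanSpace ℝ (Fin d), ENNReal.ofReal (h ^ (2 * q) * f ‖ξ‖) :=
          lintegral_mono fun ξ => ENNReal.ofReal_le_ofReal (hpt ξ)
      _ = ∫⁻ ξ : EuclideanSpace ℝ (Fin d),
            ENNReal.ofReal (h ^ (2 * q)) * ENNReal.ofReal (f ‖ξ‖) := by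
          simp_rw [ENNReal.ofReal_mul (Real.rpow_nonneg h0.le _)]
      _ = ENNReal.ofReal (h ^ (2 * q)) *
            ∫⁻ ξ : EuclideanSpace ℝ (Fin d), ENNReal.ofReal (f ‖ξ‖) :=
          lintegral_const_mul _ hfm'
      _ = ENNReal.ofReal (h ^ (2 * q)) * ((d : ℝ≥0∞) *
            volume (Metric.ball (0 : EuclideanSpace ℝ (Fin d)) 1) *
            ∫⁻ y in Set.Ioi (0:ℝ), ENNReal.ofReal (y ^ (d - 1)) * ENNReal.ofReal (f y)) := by
          rw [my_lintegral_fun_norm_addHaar volume (fun y => ENNReal.ofReal (f y))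
            hfm.ennreal_ofReal]
          rw [finrank_euclideanSpace_fin]
      _ = ENNReal.ofReal (h ^ (2 * q) * D * a ^ (-γ)) := by
          rw [hIoi, show volume (Metric.ball (0 : EuclideanSpace ℝ (Fin d)) 1)
              = ENNReal.ofReal V from (ENNReal.ofReal_toReal measure_ball_lt_top.ne).symm,
            ← ENNReal.ofReal_natCast d, ← ENNReal.ofReal_mul (by positivity),
            ← ENNReal.ofReal_mul (by positivity), ← ENNReal.ofReal_mul (by positivity)]
          congr 1
          rw [hDdef]
          ring
  have houter : ∀ s : ℝ, 0 ≤ ∫ ξ : EuclideanSpace ℝ (Fin d),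
      (Real.exp (-((t - s + h) * ‖ξ‖ ^ α)) - Real.exp (-((t - s) * ‖ξ‖ ^ α))) ^ 2 *
        ‖ξ‖ ^ (β - (d : ℝ)) := fun s =>
    integral_nonneg fun ξ => mul_nonneg (sq_nonneg _) (Real.rpow_nonneg (norm_nonneg _) _)
  calc (∫ s in Set.Ioo 0 t, ∫ ξ : EuclideanSpace ℝ (Fin d),
        (Real.exp (-((t - s + h) * ‖ξ‖ ^ α)) - Real.exp (-((t - s) * ‖ξ‖ ^ α))) ^ 2 *
          ‖ξ‖ ^ (β - (d : ℝ)))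
      ≤ ∫ s in Set.Ioo 0 t, h ^ (2 * q) * D * (t - s) ^ (-γ) := by
        apply integral_mono_of_nonneg
        · exact Filter.Eventually.of_forall fun s => houter s
        · exact hIint.const_mul (h ^ (2 * q) * D)
        · exact (ae_restrict_iff' measurableSet_Ioo).mpr (Filter.Eventually.of_forall key)
    _ = h ^ (2 * q) * D * I := by
        rw [hIdef, integral_const_mul]
    _ ≤ (D * I + 1) * h ^ (2 * q) := by nlinarith
end

section
/- Let α > 1, let t > 0, and let k ≥ 1 be an integer. Set s₀ := t. Then the iterated integral ∫₀^t ∫₀^{s₁} ⋯ ∫₀^{s_{k−1}} [ (t − s₁)(s₁ − s₂)⋯(s_{k−1} − s_k) ]^{−1/α} ds_k ds_{k−1} ⋯ ds₁ is bounded below by c₁^k · (t/k)^{k(α−1)/α}, where c₁ > 0 is a constant depending only on α (independent of k and t). In fact one may take c₁ = α/(α − 1). -/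
open MeasureTheory

/-- The iterated integral
`∫₀^t ∫₀^{s₁} ⋯ ∫₀^{s_{k-1}} ∏_{i=1}^k (s_{i-1} - s_i)^{-1/α} ds_k ⋯ ds₁`
(with `s₀ = t`), defined recursively. -/
noncomputable def iterIntegral (α : ℝ) : ℕ → ℝ → ℝ
  | 0, _ => 1
  | k + 1, t => ∫ s in Set.Ioo 0 t, (t - s) ^ (-(1 / α)) * iterIntegral α k s

/-- The Beta-type integral appearing in the recursion. -/
noncomputable def iterB (α : ℝ) (k : ℕ) : ℝ :=
  ∫ u in (0:ℝ)..1, (1 - u) ^ (-(1 / α)) * u ^ ((k : ℝ) * (1 - 1 / α))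

/-- The constants in the exact formula `iterIntegral α k t = iterC α k * t ^ (k β)`. -/
noncomputable def iterC (α : ℝ) : ℕ → ℝ
  | 0 => 1
  | k + 1 => iterB α k * iterC α k

lemma natRpow_pos (k : ℕ) (c : ℝ) : 0 < (k : ℝ) ^ ((k : ℝ) * c) := by
  rcases Nat.eq_zero_or_pos k with h | h
  · subst h; simp
  · exact Real.rpow_pos_of_pos (by exact_mod_cast h) _

lemma intervalIntegrable_base (α : ℝ) (hα : 1 < α) (a b : ℝ) :
    IntervalIntegrable (fun u : ℝ => (1 - u) ^ (-(1 / α))) volume a b := by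
  have h1 : -1 < -(1 / α) := by
    have : 1 / α < 1 := by
      rw [div_lt_one (by linarith)]; exact hα
    linarith
  have := (intervalIntegral.intervalIntegrable_rpow' (a := 1 - a) (b := 1 - b) h1).comp_sub_left 1
  simpa using this

lemma intervalIntegrable_mul (α : ℝ) (hα : 1 < α) (c : ℝ) (hc : 0 ≤ c) :
    IntervalIntegrable (fun u : ℝ => (1 - u) ^ (-(1 / α)) * u ^ c) volume 0 1 := by
  apply (intervalIntegrable_base α hα 0 1).mono_fun
  · apply Measurable.aestronglyMeasurable
    exact ((measurable_const.sub measurable_id).pow measurable_const).mul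
      (measurable_id.pow measurable_const)
  · rw [Filter.EventuallyLE, ae_restrict_iff' measurableSet_uIoc]
    refine Filter.Eventually.of_forall fun u hu => ?_
    rw [Set.uIoc_of_le (by norm_num : (0:ℝ) ≤ 1)] at hu
    have hu0 : 0 < u := hu.1
    have hu1 : u ≤ 1 := hu.2
    have h1 : u ^ c ≤ 1 := Real.rpow_le_one hu0.le hu1 hc
    have h2 : (0:ℝ) ≤ u ^ c := Real.rpow_nonneg hu0.le c
    have h3 : (0:ℝ) ≤ (1 - u) ^ (-(1 / α)) := Real.rpow_nonneg (by linarith) _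
    simp only [Real.norm_eq_abs, abs_mul, abs_of_nonneg h2, abs_of_nonneg h3]
    nlinarith

lemma iterIntegral_eq (α : ℝ) (hα : 1 < α) :
    ∀ k, ∀ t : ℝ, 0 < t →
      iterIntegral α k t = iterC α k * t ^ ((k : ℝ) * (1 - 1 / α)) := by
  intro k
  induction k with
  | zero => intro t ht; simp [iterIntegral, iterC]
  | succ k ih =>
    intro t ht
    set β := 1 - 1 / α with hβ
    have h1 : iterIntegral α (k + 1) t
        = ∫ s in Set.Ioo 0 t, (t - s) ^ (-(1 / α)) * (iterC α k * s ^ ((k : ℝ) * β)) := by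
      rw [iterIntegral]
      exact setIntegral_congr_fun measurableSet_Ioo fun s hs => by rw [ih s hs.1]
    set f : ℝ → ℝ := fun s => (t - s) ^ (-(1 / α)) * (iterC α k * s ^ ((k : ℝ) * β)) with hf
    have h2 : iterIntegral α (k + 1) t = ∫ s in (0:ℝ)..t, f s := by
      rw [h1, intervalIntegral.integral_of_le ht.le, integral_Ioc_eq_integral_Ioo]
    have h3 : ∫ s in (0:ℝ)..t, f s = t • ∫ u in (0:ℝ)..1, f (t * u) := by
      have := intervalIntegral.smul_integral_comp_mul_left (a := 0) (b := 1) f t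
      rw [mul_zero, mul_one] at this
      exact this.symm
    have h4 : ∫ u in (0:ℝ)..1, f (t * u)
        = ∫ u in (0:ℝ)..1, (t ^ (-(1 / α)) * (iterC α k * t ^ ((k : ℝ) * β))) *
            ((1 - u) ^ (-(1 / α)) * u ^ ((k : ℝ) * β)) := by
      apply intervalIntegral.integral_congr
      intro u hu
      rw [Set.uIcc_of_le (by norm_num : (0:ℝ) ≤ 1)] at hu
      obtain ⟨hu0, hu1⟩ := hu
      simp only [hf]
      rw [show t - t * u = t * (1 - u) by ring,
        Real.mul_rpow ht.le (by linarith), Real.mul_rpow ht.le hu0]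
      ring
    rw [h2, h3, h4, intervalIntegral.integral_const_mul]
    rw [smul_eq_mul, iterC, ← iterB]
    have he : ((k : ℝ) + 1) * β = 1 + (-(1 / α) + (k : ℝ) * β) := by
      rw [hβ]; ring
    rw [show ((k + 1 : ℕ) : ℝ) = (k : ℝ) + 1 by push_cast; ring, he,
      Real.rpow_add ht, Real.rpow_add ht, Real.rpow_one]
    ring

lemma iterB_ge (α : ℝ) (hα : 1 < α) (k : ℕ) :
    (1 / (1 - 1 / α)) * ((k : ℝ) ^ ((k : ℝ) * (1 - 1 / α)) *
      ((k : ℝ) + 1) ^ (-(((k : ℝ) + 1) * (1 - 1 / α)))) ≤ iterB α k := by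
  have hα0 : (0:ℝ) < α := by linarith
  set β := 1 - 1 / α with hβ
  have hβ0 : 0 < β := by
    rw [hβ]; have : 1 / α < 1 := by rw [div_lt_one hα0]; exact hα
    linarith
  set c : ℝ := (k : ℝ) * β with hc
  have hc0 : 0 ≤ c := by positivity
  set a : ℝ := (k : ℝ) / ((k : ℝ) + 1) with ha
  have hk1 : (0:ℝ) < (k : ℝ) + 1 := by positivity
  have ha0 : 0 ≤ a := by positivity
  have ha1 : a ≤ 1 := by
    rw [ha, div_le_one hk1]; linarith
  have h1a : 1 - a = 1 / ((k : ℝ) + 1) := by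
    rw [ha]; field_simp; ring
  -- Step 1: restrict the integral to [a, 1]
  have hiB : iterB α k = ∫ u in (0:ℝ)..1, (1 - u) ^ (-(1 / α)) * u ^ c := rfl
  have step1 : ∫ u in a..1, (1 - u) ^ (-(1 / α)) * u ^ c ≤ iterB α k := by
    rw [hiB]
    apply intervalIntegral.integral_mono_interval ha0 ha1 le_rfl ?_
      (intervalIntegrable_mul α hα c hc0)
    rw [Filter.EventuallyLE, ae_restrict_iff' measurableSet_Ioc]
    refine Filter.Eventually.of_forall fun u hu => ?_
    have := hu.1
    have := hu.2
    have h3 : (0:ℝ) ≤ (1 - u) ^ (-(1 / α)) := Real.rpow_nonneg (by linarith) _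
    have h2 : (0:ℝ) ≤ u ^ c := Real.rpow_nonneg (by linarith) c
    exact mul_nonneg h3 h2
  -- Step 2: lower-bound u^c by a^c
  have step2 : ∫ u in a..1, (1 - u) ^ (-(1 / α)) * a ^ c
      ≤ ∫ u in a..1, (1 - u) ^ (-(1 / α)) * u ^ c := by
    apply intervalIntegral.integral_mono_on ha1 ((intervalIntegrable_base α hα a 1).mul_const _)
      ?_ ?_
    · apply (intervalIntegrable_mul α hα c hc0).mono_set
      rw [Set.uIcc_of_le ha1, Set.uIcc_of_le (by norm_num : (0:ℝ) ≤ 1)]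
      exact Set.Icc_subset_Icc ha0 (le_refl 1)
    · intro u hu
      have h3 : (0:ℝ) ≤ (1 - u) ^ (-(1 / α)) := Real.rpow_nonneg (by linarith [hu.2]) _
      exact mul_le_mul_of_nonneg_left (Real.rpow_le_rpow ha0 hu.1 hc0) h3
  -- Step 3: compute the remaining integral
  have step3 : ∫ u in a..1, (1 - u) ^ (-(1 / α)) = (1 - a) ^ β / β := by
    have heq := intervalIntegral.integral_comp_sub_left (a := a) (b := 1)
      (fun v : ℝ => v ^ (-(1 / α))) 1
    rw [heq, sub_self]
    rw [integral_rpow (Or.inl (by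
      have : 1 / α < 1 := by rw [div_lt_one hα0]; exact hα
      linarith))]
    rw [Real.zero_rpow (by rw [hβ] at hβ0; intro h; linarith), show -(1 / α) + 1 = β by rw [hβ]; ring]
    ring
  have step3' : ∫ u in a..1, (1 - u) ^ (-(1 / α)) * a ^ c
      = a ^ c * ((1 - a) ^ β / β) := by
    rw [intervalIntegral.integral_mul_const, step3]; ring
  -- Combine
  have key : a ^ c * ((1 - a) ^ β / β) ≤ iterB α k := by
    calc a ^ c * ((1 - a) ^ β / β) = ∫ u in a..1, (1 - u) ^ (-(1 / α)) * a ^ c := step3'.symm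
    _ ≤ _ := le_trans step2 step1
  refine le_trans (le_of_eq ?_) key
  -- algebra: (1/β) * (k^c * (k+1)^(-(k+1)β)) = a^c * ((1-a)^β / β)
  rw [h1a, ha]
  rw [Real.div_rpow (Nat.cast_nonneg k) hk1.le, Real.div_rpow (by norm_num) hk1.le,
    Real.one_rpow]
  have e1 : ((k : ℝ) + 1) ^ (-(((k : ℝ) + 1) * β))
      = (((k : ℝ) + 1) ^ c)⁻¹ * (((k : ℝ) + 1) ^ β)⁻¹ := by
    rw [← Real.rpow_neg hk1.le, ← Real.rpow_neg hk1.le, ← Real.rpow_add hk1, hc]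
    ring_nf
  rw [e1]
  have hp1 : ((k : ℝ) + 1) ^ c ≠ 0 := (Real.rpow_pos_of_pos hk1 c).ne'
  have hp2 : ((k : ℝ) + 1) ^ β ≠ 0 := (Real.rpow_pos_of_pos hk1 β).ne'
  ring

lemma iterC_ge (α : ℝ) (hα : 1 < α) :
    ∀ k : ℕ, (1 / (1 - 1 / α)) ^ k * (k : ℝ) ^ (-((k : ℝ) * (1 - 1 / α))) ≤ iterC α k := by
  have hα0 : (0:ℝ) < α := by linarith
  set β := 1 - 1 / α with hβ
  have hβ0 : 0 < β := by
    rw [hβ]; have : 1 / α < 1 := by rw [div_lt_one hα0]; exact hα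
    linarith
  intro k
  induction k with
  | zero => simp [iterC]
  | succ k ih =>
    have hB := iterB_ge α hα k
    rw [← hβ] at hB
    have hbBpos : 0 < (1 / β) * ((k : ℝ) ^ ((k : ℝ) * β) *
        ((k : ℝ) + 1) ^ (-(((k : ℝ) + 1) * β))) := by
      have h1 := natRpow_pos k β
      have h2 : (0:ℝ) < ((k : ℝ) + 1) ^ (-(((k : ℝ) + 1) * β)) :=
        Real.rpow_pos_of_pos (by positivity) _
      positivity
    have hbCpos : 0 < (1 / β) ^ k * (k : ℝ) ^ (-((k : ℝ) * β)) := by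
      have h1 : 0 < (k : ℝ) ^ (-((k : ℝ) * β)) := by
        rw [show -((k : ℝ) * β) = (k : ℝ) * (-β) by ring]
        exact natRpow_pos k (-β)
      positivity
    have hmul : ((1 / β) * ((k : ℝ) ^ ((k : ℝ) * β) *
        ((k : ℝ) + 1) ^ (-(((k : ℝ) + 1) * β)))) *
        ((1 / β) ^ k * (k : ℝ) ^ (-((k : ℝ) * β))) ≤ iterB α k * iterC α k :=
      mul_le_mul hB ih hbCpos.le (hbBpos.le.trans hB)
    rw [iterC]
    refine le_trans (le_of_eq ?_) hmul
    have hcancel : (k : ℝ) ^ ((k : ℝ) * β) * (k : ℝ) ^ (-((k : ℝ) * β)) = 1 := by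
      rcases Nat.eq_zero_or_pos k with h | h
      · subst h; simp
      · rw [← Real.rpow_add (by exact_mod_cast h)]; simp
    rw [show ((k + 1 : ℕ) : ℝ) = (k : ℝ) + 1 by push_cast; ring]
    calc (1 / β) ^ (k + 1) * ((k : ℝ) + 1) ^ (-(((k : ℝ) + 1) * β))
        = ((1 / β) * ((k : ℝ) + 1) ^ (-(((k : ℝ) + 1) * β))) * (1 / β) ^ k *
          ((k : ℝ) ^ ((k : ℝ) * β) * (k : ℝ) ^ (-((k : ℝ) * β))) := by
          rw [hcancel]; ring
      _ = _ := by ring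

/-- For `α > 1` there is a constant `c₁ > 0` depending only on `α` such that for every
`t > 0` and every integer `k ≥ 1`, the iterated integral is at least
`c₁^k * (t/k)^{k(α-1)/α}`. -/
theorem iterIntegral_lower_bound (α : ℝ) (hα : 1 < α) :
    ∃ c₁ > 0, ∀ t : ℝ, 0 < t → ∀ k : ℕ, 1 ≤ k →
      c₁ ^ k * (t / (k : ℝ)) ^ ((k : ℝ) * (α - 1) / α) ≤ iterIntegral α k t := by
  have hα0 : (0:ℝ) < α := by linarith
  set β := 1 - 1 / α with hβ
  have hβ0 : 0 < β := by
    rw [hβ]; have : 1 / α < 1 := by rw [div_lt_one hα0]; exact hα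
    linarith
  refine ⟨1 / β, by positivity, fun t ht k hk => ?_⟩
  have hkpos : (0:ℝ) < (k : ℝ) := by exact_mod_cast hk
  have hexp : (k : ℝ) * (α - 1) / α = (k : ℝ) * β := by
    rw [hβ]; field_simp
  rw [hexp, iterIntegral_eq α hα k t ht]
  have h1 : (t / (k : ℝ)) ^ ((k : ℝ) * β) = t ^ ((k : ℝ) * β) * (k : ℝ) ^ (-((k : ℝ) * β)) := by
    rw [Real.div_rpow ht.le hkpos.le, Real.rpow_neg hkpos.le, div_eq_mul_inv]
  rw [h1]
  have h2 := iterC_ge α hα k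
  rw [← hβ] at h2
  have h3 : 0 < t ^ ((k : ℝ) * β) := Real.rpow_pos_of_pos ht _
  calc (1 / β) ^ k * (t ^ ((k : ℝ) * β) * (k : ℝ) ^ (-((k : ℝ) * β)))
      = ((1 / β) ^ k * (k : ℝ) ^ (-((k : ℝ) * β))) * t ^ ((k : ℝ) * β) := by ring
    _ ≤ iterC α k * t ^ ((k : ℝ) * β) := by
        exact mul_le_mul_of_nonneg_right h2 h3.le
end

section
/- Let d ≥ 1 be an integer, let α > 0, let β satisfy 0 < β < d, and let c₀ > 0. Let φ : ℝ^d → [0, ∞) be a measurable function satisfying φ(x) ≤ c₀ · min(1, |x|^{−d−α}) for all x ∈ ℝ^d, and define p_t(x, y) := t^{−d/α} φ((x − y) · t^{−1/α}) for t > 0 and x, y ∈ ℝ^d. Assume the Chapman–Kolmogorov identity ∫_{ℝ^d} p_t(x, ω) p_t(ω, y) dω = p_{2t}(x, y) holds for all t > 0 and x, y ∈ ℝ^d. Then there exists a constant c₁ > 0 such that for all t > 0 and all x, y ∈ ℝ^d, ∫_{ℝ^d} ∫_{ℝ^d} p_t(x, ω) p_t(y, z) · |ω − z|^{−β} dω dz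 ≤ c₁ · t^{−β/α}. -/
open MeasureTheory Metric Set
open scoped ENNReal

lemma aux_riesz_integrableOn {d : ℕ} {β : ℝ} (hβ0 : 0 < β) (hβd : β < (d : ℝ)) :
    IntegrableOn (fun x : EuclideanSpace ℝ (Fin d) => ‖x‖ ^ (-β)) (ball 0 1) := by
  set E := EuclideanSpace ℝ (Fin d)
  set μ : Measure E := volume.restrict (ball 0 1) with hμ
  have h_meas : Measurable fun x : E => ‖x‖ ^ (-β) := by fun_prop
  have h_nonneg : ∀ x : E, 0 ≤ ‖x‖ ^ (-β) := fun x => Real.rpow_nonneg (norm_nonneg x) _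
  refine ⟨h_meas.aestronglyMeasurable, ?_⟩
  rw [HasFiniteIntegral, lintegral_enorm_of_nonneg h_nonneg,
    lintegral_eq_lintegral_meas_le μ (Filter.Eventually.of_forall h_nonneg)
      h_meas.aemeasurable]
  set e : ℝ := (-β⁻¹) * (d : ℝ) with he
  have hed : e < -1 := by
    have : (1 : ℝ) < (d : ℝ) / β := (one_lt_div hβ0).2 hβd
    have : e = -((d : ℝ) / β) := by rw [he]; field_simp
    rw [this]
    linarith
  have hsub : ∀ t : ℝ, 0 < t →
      {a : E | t ≤ ‖a‖ ^ (-β)} ⊆ closedBall 0 (t ^ (-β⁻¹)) := by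
    intro t ht a ha
    simp only [Set.mem_setOf_eq] at ha
    rw [Metric.mem_closedBall, dist_zero_right]
    have h1 : (‖a‖ ^ (-β)) ^ (-β⁻¹) ≤ t ^ (-β⁻¹) :=
      Real.rpow_le_rpow_of_nonpos ht ha (neg_nonpos.2 (inv_nonneg.2 hβ0.le))
    calc ‖a‖ = ‖a‖ ^ ((-β) * (-β⁻¹)) := by
          rw [neg_mul_neg, mul_inv_cancel₀ hβ0.ne', Real.rpow_one]
      _ = (‖a‖ ^ (-β)) ^ (-β⁻¹) := Real.rpow_mul (norm_nonneg a) _ _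
      _ ≤ t ^ (-β⁻¹) := h1
  calc ∫⁻ t in Ioi (0:ℝ), μ {a : E | t ≤ ‖a‖ ^ (-β)}
      ≤ ∫⁻ t in Ioc (0:ℝ) 1 ∪ Ioi 1, μ {a : E | t ≤ ‖a‖ ^ (-β)} :=
        lintegral_mono_set Ioi_subset_Ioc_union_Ioi
    _ ≤ (∫⁻ t in Ioc (0:ℝ) 1, μ {a : E | t ≤ ‖a‖ ^ (-β)})
        + ∫⁻ t in Ioi (1:ℝ), μ {a : E | t ≤ ‖a‖ ^ (-β)} := lintegral_union_le _ _ _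
    _ < ∞ := ENNReal.add_lt_top.2 ⟨?_, ?_⟩
  · calc (∫⁻ t in Ioc (0:ℝ) 1, μ {a : E | t ≤ ‖a‖ ^ (-β)})
        ≤ ∫⁻ _t in Ioc (0:ℝ) 1, volume (ball (0:E) 1) := by
          apply lintegral_mono
          intro t
          calc μ {a : E | t ≤ ‖a‖ ^ (-β)} ≤ μ Set.univ := measure_mono (Set.subset_univ _)
            _ = volume (ball (0:E) 1) := by rw [hμ, Measure.restrict_apply_univ]
      _ = volume (ball (0:E) 1) * volume (Ioc (0:ℝ) 1) := setLIntegral_const _ _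
      _ < ∞ := by
          apply ENNReal.mul_lt_top measure_ball_lt_top
          rw [Real.volume_Ioc]
          exact ENNReal.ofReal_lt_top
  · calc (∫⁻ t in Ioi (1:ℝ), μ {a : E | t ≤ ‖a‖ ^ (-β)})
        ≤ ∫⁻ t in Ioi (1:ℝ), ENNReal.ofReal (t ^ e) * volume (ball (0:E) 1) := by
          apply setLIntegral_mono (by fun_prop)
          intro t ht
          have ht1 : (1:ℝ) < t := ht
          have ht0 : (0:ℝ) < t := lt_trans one_pos ht1
          calc μ {a : E | t ≤ ‖a‖ ^ (-β)}
              ≤ volume {a : E | t ≤ ‖a‖ ^ (-β)} := Measure.restrict_le_self _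
            _ ≤ volume (closedBall (0:E) (t ^ (-β⁻¹))) := measure_mono (hsub t ht0)
            _ = ENNReal.ofReal ((t ^ (-β⁻¹)) ^ Module.finrank ℝ E)
                * volume (ball (0:E) 1) :=
                Measure.addHaar_closedBall _ _ (Real.rpow_nonneg ht0.le _)
            _ = ENNReal.ofReal (t ^ e) * volume (ball (0:E) 1) := by
                congr 1
                rw [he, Real.rpow_mul ht0.le, Real.rpow_natCast,
                  finrank_euclideanSpace_fin]
      _ = (∫⁻ t in Ioi (1:ℝ), ENNReal.ofReal (t ^ e)) * volume (ball (0:E) 1) :=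
          lintegral_mul_const' _ _ measure_ball_lt_top.ne
      _ < ∞ := ENNReal.mul_lt_top
          ((integrableOn_Ioi_rpow_of_lt hed one_pos).setLIntegral_lt_top)
          measure_ball_lt_top


open MeasureTheory

/-- Bound on the double convolution of the scaled heat kernel against the Riesz kernel:
if `φ` is a nonnegative measurable function with `φ x ≤ c₀ * min 1 (|x|^{-d-α})`,
`p_t(x,y) := t^{-d/α} φ((x-y) t^{-1/α})` satisfies Chapman–Kolmogorov, and `0 < β < d`,
then there is `c₁ > 0` such that for all `t > 0` and `x, y ∈ ℝ^d`,
`∫∫ p_t(x,ω) p_t(y,z) |ω - z|^{-β} dω dz ≤ c₁ t^{-β/α}`. -/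
theorem riesz_kernel_double_integral_bound (d : ℕ) (hd : 1 ≤ d) (α β c₀ : ℝ)
    (hα : 0 < α) (hβ0 : 0 < β) (hβd : β < (d : ℝ)) (hc₀ : 0 < c₀)
    (φ : EuclideanSpace ℝ (Fin d) → ℝ)
    (hφ_meas : Measurable φ) (hφ_nonneg : ∀ x, 0 ≤ φ x)
    (hφ_bdd : ∀ x, φ x ≤ c₀)
    (hφ_decay : ∀ x : EuclideanSpace ℝ (Fin d), x ≠ 0 → φ x ≤ c₀ * ‖x‖ ^ (-((d : ℝ) + α)))
    (hCK : ∀ t : ℝ, 0 < t → ∀ x y : EuclideanSpace ℝ (Fin d),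
      (∫ ω : EuclideanSpace ℝ (Fin d),
          (t ^ (-(d : ℝ) / α) * φ ((t ^ (-(1 : ℝ) / α)) • (x - ω))) *
          (t ^ (-(d : ℝ) / α) * φ ((t ^ (-(1 : ℝ) / α)) • (ω - y))))
        = (2 * t) ^ (-(d : ℝ) / α) * φ (((2 * t) ^ (-(1 : ℝ) / α)) • (x - y))) :
    ∃ c₁ > 0, ∀ t : ℝ, 0 < t → ∀ x y : EuclideanSpace ℝ (Fin d),
      (∫ ω : EuclideanSpace ℝ (Fin d), ∫ z : EuclideanSpace ℝ (Fin d),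
        (t ^ (-(d : ℝ) / α) * φ ((t ^ (-(1 : ℝ) / α)) • (x - ω))) *
        (t ^ (-(d : ℝ) / α) * φ ((t ^ (-(1 : ℝ) / α)) • (y - z))) * ‖ω - z‖ ^ (-β))
        ≤ c₁ * t ^ (-β / α) := by
  set r : ℝ := (d : ℝ) + α with hr
  have hd1 : (1 : ℝ) ≤ (d : ℝ) := by exact_mod_cast hd
  have hrpos : 0 < r := by rw [hr]; linarith
  have hfr : (Module.finrank ℝ (EuclideanSpace ℝ (Fin d)) : ℝ) < r := by
    rw [finrank_euclideanSpace_fin, hr]; linarith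
  set g : EuclideanSpace ℝ (Fin d) → ℝ := fun u => c₀ * (2 : ℝ) ^ r * (1 + ‖u‖) ^ (-r) with hg
  have hg_int : Integrable g := (integrable_one_add_norm hfr).const_mul _
  have hg_nonneg : ∀ u, 0 ≤ g u := by
    intro u
    have h1 : (0 : ℝ) < 1 + ‖u‖ := by positivity
    rw [hg]
    positivity
  have h2r : (2 : ℝ) ^ r * (2 : ℝ) ^ (-r) = 1 := by
    rw [← Real.rpow_add two_pos]; simp
  have hφg : ∀ u, φ u ≤ g u := by
    intro u
    have h1 : (0 : ℝ) < 1 + ‖u‖ := by positivity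
    rcases le_total ‖u‖ 1 with h | h
    · have h2 : (1 : ℝ) + ‖u‖ ≤ 2 := by linarith
      have h3 : ((2 : ℝ)) ^ (-r) ≤ (1 + ‖u‖) ^ (-r) :=
        Real.rpow_le_rpow_of_nonpos h1 h2 (neg_nonpos.2 hrpos.le)
      calc φ u ≤ c₀ := hφ_bdd u
        _ = c₀ * (2 : ℝ) ^ r * (2 : ℝ) ^ (-r) := by
            rw [mul_assoc, h2r, mul_one]
        _ ≤ g u := mul_le_mul_of_nonneg_left h3 (by positivity)
    · have hu0 : u ≠ 0 := by
        intro h0; rw [h0, norm_zero] at h; linarith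
      have h2 : (1 : ℝ) + ‖u‖ ≤ 2 * ‖u‖ := by linarith
      have h3 : (2 * ‖u‖) ^ (-r) ≤ (1 + ‖u‖) ^ (-r) :=
        Real.rpow_le_rpow_of_nonpos h1 h2 (neg_nonpos.2 hrpos.le)
      have h4 : (2 * ‖u‖) ^ (-r) = (2 : ℝ) ^ (-r) * ‖u‖ ^ (-r) :=
        Real.mul_rpow (by norm_num) (norm_nonneg u)
      calc φ u ≤ c₀ * ‖u‖ ^ (-r) := hφ_decay u hu0
        _ = c₀ * (2 : ℝ) ^ r * ((2 * ‖u‖) ^ (-r)) := by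
            rw [h4, show c₀ * (2:ℝ)^r * ((2:ℝ)^(-r) * ‖u‖^(-r))
              = c₀ * (((2:ℝ)^r * (2:ℝ)^(-r)) * ‖u‖^(-r)) from by ring, h2r, one_mul]
        _ ≤ g u := mul_le_mul_of_nonneg_left h3 (by positivity)
  set Ag : ℝ := ∫ u, g u with hAg
  have hAg_nonneg : 0 ≤ Ag := integral_nonneg hg_nonneg
  have hφ_int : Integrable φ := by
    refine hg_int.mono' hφ_meas.aestronglyMeasurable (Filter.Eventually.of_forall fun u => ?_)
    rw [Real.norm_eq_abs, abs_of_nonneg (hφ_nonneg u)]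
    exact hφg u
  have hφ_le : (∫ u, φ u) ≤ Ag := integral_mono hφ_int hg_int hφg
  have hφ_int_nonneg : 0 ≤ ∫ u, φ u := integral_nonneg hφ_nonneg
  -- the Riesz constant
  set I : ℝ := ∫ v in ball (0 : (EuclideanSpace ℝ (Fin d))) 1, ‖v‖ ^ (-β) with hI
  have hI_nonneg : 0 ≤ I :=
    setIntegral_nonneg measurableSet_ball fun v _ => Real.rpow_nonneg (norm_nonneg v) _
  set F : EuclideanSpace ℝ (Fin d) → ℝ := (ball (0 : (EuclideanSpace ℝ (Fin d))) 1).indicator (fun v => ‖v‖ ^ (-β)) with hF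
  have hF_int : Integrable F :=
    (integrable_indicator_iff measurableSet_ball).2 (aux_riesz_integrableOn hβ0 hβd)
  have hF_nonneg : ∀ v, 0 ≤ F v :=
    fun v => Set.indicator_nonneg (fun v _ => Real.rpow_nonneg (norm_nonneg v) _) v
  have hF_integral : (∫ v, F v) = I := by
    rw [hF, integral_indicator measurableSet_ball]
  set B : ℝ := c₀ * I + Ag with hB
  have hB_nonneg : 0 ≤ B := add_nonneg (mul_nonneg hc₀.le hI_nonneg) hAg_nonneg
  -- uniform bound on the convolution with the Riesz kernel
  have key : ∀ w : (EuclideanSpace ℝ (Fin d)), (∫ u, φ u * ‖w - u‖ ^ (-β)) ≤ B := by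
    intro w
    set h : EuclideanSpace ℝ (Fin d) → ℝ := fun u => c₀ * F (w - u) + g u with hh
    have hh_int : Integrable h := ((hF_int.comp_sub_left w).const_mul c₀).add hg_int
    have hh_integral : (∫ u, h u) = B := by
      rw [hh]
      rw [integral_add ((hF_int.comp_sub_left w).const_mul c₀) hg_int,
        integral_const_mul, integral_sub_left_eq_self F volume w, hF_integral]
    have hfh : ∀ u, φ u * ‖w - u‖ ^ (-β) ≤ h u := by
      intro u
      by_cases hu : w - u ∈ ball (0 : (EuclideanSpace ℝ (Fin d))) 1
      · have hFv : F (w - u) = ‖w - u‖ ^ (-β) := Set.indicator_of_mem hu _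
        calc φ u * ‖w - u‖ ^ (-β) ≤ c₀ * ‖w - u‖ ^ (-β) :=
              mul_le_mul_of_nonneg_right (hφ_bdd u) (Real.rpow_nonneg (norm_nonneg _) _)
          _ = c₀ * F (w - u) := by rw [hFv]
          _ ≤ h u := le_add_of_nonneg_right (hg_nonneg u)
      · have h1 : (1 : ℝ) ≤ ‖w - u‖ := by
          rw [mem_ball, dist_zero_right, not_lt] at hu
          exact hu
        have h2 : ‖w - u‖ ^ (-β) ≤ 1 :=
          Real.rpow_le_one_of_one_le_of_nonpos h1 (neg_nonpos.2 hβ0.le)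
        calc φ u * ‖w - u‖ ^ (-β) ≤ φ u * 1 :=
              mul_le_mul_of_nonneg_left h2 (hφ_nonneg u)
          _ = φ u := mul_one _
          _ ≤ g u := hφg u
          _ ≤ h u := le_add_of_nonneg_left (mul_nonneg hc₀.le (hF_nonneg _))
    calc (∫ u, φ u * ‖w - u‖ ^ (-β)) ≤ ∫ u, h u :=
          integral_mono_of_nonneg
            (Filter.Eventually.of_forall fun u =>
              mul_nonneg (hφ_nonneg u) (Real.rpow_nonneg (norm_nonneg _) _))
            hh_int (Filter.Eventually.of_forall hfh)
      _ = B := hh_integral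
  refine ⟨B * Ag + 1, by have := mul_nonneg hB_nonneg hAg_nonneg; linarith, ?_⟩
  intro t ht x y
  set c : ℝ := t ^ (-(1 : ℝ) / α) with hc
  set s : ℝ := t ^ ((1 : ℝ) / α) with hs
  have hcpos : 0 < c := Real.rpow_pos_of_pos ht _
  have hspos : 0 < s := Real.rpow_pos_of_pos ht _
  have hsc : s * c = 1 := by
    rw [hs, hc, ← Real.rpow_add ht, show (1:ℝ)/α + -(1:ℝ)/α = 0 from by ring, Real.rpow_zero]
  have hcs : c * s = 1 := by rw [mul_comm]; exact hsc
  have hcse : c = s⁻¹ := eq_inv_of_mul_eq_one_left hcs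
  set τ : ℝ := t ^ (-(d : ℝ) / α) with hτ
  have hτpos : 0 < τ := Real.rpow_pos_of_pos ht _
  have hsd : s ^ (d : ℕ) = t ^ ((d : ℝ) / α) := by
    rw [hs, ← Real.rpow_natCast (t ^ ((1 : ℝ) / α)) d, ← Real.rpow_mul ht.le]
    congr 1; ring
  have hτsd : τ * s ^ (d : ℕ) = 1 := by
    rw [hsd, hτ, ← Real.rpow_add ht, show -(d:ℝ)/α + (d:ℝ)/α = 0 from by ring, Real.rpow_zero]
  have hsβ : s ^ (-β) = t ^ (-β / α) := by
    rw [hs, ← Real.rpow_mul ht.le]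
    congr 1; ring
  have hfrk : Module.finrank ℝ (EuclideanSpace ℝ (Fin d)) = d := by rw [finrank_euclideanSpace_fin]
  have htβpos : 0 < t ^ (-β / α) := Real.rpow_pos_of_pos ht _
  -- the inner integral
  have inner_eq : ∀ ω : (EuclideanSpace ℝ (Fin d)), (∫ z : (EuclideanSpace ℝ (Fin d)), τ * φ (c • (y - z)) * ‖ω - z‖ ^ (-β))
      = t ^ (-β / α) * ∫ u : (EuclideanSpace ℝ (Fin d)), φ u * ‖(-(c • (ω - y))) - u‖ ^ (-β) := by
    intro ω
    set G : EuclideanSpace ℝ (Fin d) → ℝ := fun v => τ * φ (c • v) * ‖(ω - y) + v‖ ^ (-β) with hG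
    have step1 : (∫ z : (EuclideanSpace ℝ (Fin d)), τ * φ (c • (y - z)) * ‖ω - z‖ ^ (-β)) = ∫ v, G v := by
      rw [← integral_sub_left_eq_self G volume y]
      congr 1; funext z
      simp only [hG, sub_add_sub_cancel]
    have step2 : (∫ v : (EuclideanSpace ℝ (Fin d)), G v) = (s ^ (Module.finrank ℝ (EuclideanSpace ℝ (Fin d)))) • ∫ u, G (s • u) := by
      rw [Measure.integral_comp_smul_of_nonneg volume G s (hR := hspos.le), smul_smul,
        mul_inv_cancel₀ (pow_ne_zero _ hspos.ne'), one_smul]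
    have step3 : ∀ u : (EuclideanSpace ℝ (Fin d)), G (s • u)
        = (τ * s ^ (-β)) * (φ u * ‖(-(c • (ω - y))) - u‖ ^ (-β)) := by
      intro u
      have h1 : c • (s • u) = u := by rw [smul_smul, hcs, one_smul]
      have h2 : (ω - y) + s • u = s • ((c • (ω - y)) + u) := by
        rw [smul_add, smul_smul, hsc, one_smul]
      have h3 : ‖(ω - y) + s • u‖ ^ (-β) = s ^ (-β) * ‖(c • (ω - y)) + u‖ ^ (-β) := by
        rw [h2, norm_smul, Real.norm_eq_abs, abs_of_pos hspos,
          Real.mul_rpow hspos.le (norm_nonneg _)]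
      have h4 : ‖(c • (ω - y)) + u‖ = ‖(-(c • (ω - y))) - u‖ := by
        rw [show (-(c • (ω - y))) - u = -((c • (ω - y)) + u) from by abel, norm_neg]
      simp only [hG, h1, h3, h4]
      ring
    rw [step1, step2]
    simp only [step3]
    rw [integral_const_mul, smul_eq_mul, hfrk, ← mul_assoc,
      show s ^ (d : ℕ) * (τ * s ^ (-β)) = (τ * s ^ (d : ℕ)) * s ^ (-β) from by ring,
      hτsd, one_mul, hsβ]
  -- integrability and integral of the first factor
  have Aint : Integrable (fun ω : EuclideanSpace ℝ (Fin d) => τ * φ (c • (x - ω))) := by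
    have h1 : Integrable (fun v : EuclideanSpace ℝ (Fin d) => φ (c • v)) :=
      (integrable_comp_smul_iff volume φ hcpos.ne').2 hφ_int
    exact (h1.comp_sub_left x).const_mul τ
  have Aval : (∫ ω : (EuclideanSpace ℝ (Fin d)), τ * φ (c • (x - ω))) = ∫ u, φ u := by
    rw [integral_const_mul, integral_sub_left_eq_self (fun v => φ (c • v)) volume x,
      hcse, Measure.integral_comp_inv_smul_of_nonneg volume φ hspos.le, smul_eq_mul,
      ← mul_assoc, hfrk, hτsd, one_mul]
  have Anonneg : ∀ ω : (EuclideanSpace ℝ (Fin d)), 0 ≤ τ * φ (c • (x - ω)) :=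
    fun ω => mul_nonneg hτpos.le (hφ_nonneg _)
  -- rewrite the double integral
  have J : (∫ ω : (EuclideanSpace ℝ (Fin d)), ∫ z : (EuclideanSpace ℝ (Fin d)),
        (τ * φ (c • (x - ω))) * (τ * φ (c • (y - z))) * ‖ω - z‖ ^ (-β))
      = ∫ ω : (EuclideanSpace ℝ (Fin d)), (τ * φ (c • (x - ω))) *
          (t ^ (-β / α) * ∫ u : (EuclideanSpace ℝ (Fin d)), φ u * ‖(-(c • (ω - y))) - u‖ ^ (-β)) := by
    congr 1; funext ω
    rw [← inner_eq ω, ← integral_const_mul]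
    congr 1; funext z
    ring
  rw [J]
  have Knonneg : ∀ ω : (EuclideanSpace ℝ (Fin d)), 0 ≤ ∫ u : (EuclideanSpace ℝ (Fin d)), φ u * ‖(-(c • (ω - y))) - u‖ ^ (-β) :=
    fun ω => integral_nonneg fun u =>
      mul_nonneg (hφ_nonneg u) (Real.rpow_nonneg (norm_nonneg _) _)
  calc (∫ ω : (EuclideanSpace ℝ (Fin d)), (τ * φ (c • (x - ω))) *
          (t ^ (-β / α) * ∫ u : (EuclideanSpace ℝ (Fin d)), φ u * ‖(-(c • (ω - y))) - u‖ ^ (-β)))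
      ≤ ∫ ω : (EuclideanSpace ℝ (Fin d)), (τ * φ (c • (x - ω))) * (t ^ (-β / α) * B) := by
        refine integral_mono_of_nonneg
          (Filter.Eventually.of_forall fun ω =>
            mul_nonneg (Anonneg ω) (mul_nonneg htβpos.le (Knonneg ω)))
          (Aint.mul_const _)
          (Filter.Eventually.of_forall fun ω => ?_)
        exact mul_le_mul_of_nonneg_left
          (mul_le_mul_of_nonneg_left (key _) htβpos.le) (Anonneg ω)
    _ = (∫ ω : (EuclideanSpace ℝ (Fin d)), τ * φ (c • (x - ω))) * (t ^ (-β / α) * B) := integral_mul_const _ _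
    _ = (B * ∫ u, φ u) * t ^ (-β / α) := by rw [Aval]; ring
    _ ≤ (B * Ag + 1) * t ^ (-β / α) := by
        have h1 : B * (∫ u, φ u) ≤ B * Ag + 1 := by
          have h2 := mul_le_mul_of_nonneg_left hφ_le hB_nonneg
          linarith
        exact mul_le_mul_of_nonneg_right h1 htβpos.le
end

section
/- Let d ≥ 1 be an integer, let α > 0, let β satisfy 0 < β < d, and let c₀ > 0. Let φ : ℝ^d → [0, ∞) be a measurable function satisfying φ(x) ≤ c₀ · min(1, |x|^{−d−α}) for all x ∈ ℝ^d. Then there exists a constant c₁ > 0 such that for all t > 0 and all w ∈ ℝ^d, ∫_{ℝ^d} t^{−d/α} φ((w − u) · t^{−1/α}) · |u|^{−β} du ≤ c₁ · t^{−β/α}. -/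
open MeasureTheory Metric Set
open scoped ENNReal

open MeasureTheory Metric Set
open scoped ENNReal

lemma riesz_ball_lintegral_lt_top (d : ℕ) (hd : 1 ≤ d) {β : ℝ} (hβ0 : 0 < β)
    (hβd : β < (d : ℝ)) :
    ∫⁻ x in ball (0 : EuclideanSpace ℝ (Fin d)) 1, ENNReal.ofReal (‖x‖ ^ (-β)) < ⊤ := by
  classical
  set E := EuclideanSpace ℝ (Fin d)
  haveI : Nonempty (Fin d) := ⟨⟨0, hd⟩⟩
  have hfr : Module.finrank ℝ E = d := finrank_euclideanSpace_fin
  set f : E → ℝ≥0∞ := fun x => ENNReal.ofReal (‖x‖ ^ (-β)) with hf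
  set S : ℕ → Set E := fun n => closedBall 0 ((1/2 : ℝ)^n) \ ball 0 ((1/2 : ℝ)^(n+1)) with hS
  have hcover : ball (0 : E) 1 ⊆ {0} ∪ ⋃ n, S n := by
    intro x hx
    rcases eq_or_ne x 0 with rfl | hx0
    · exact Or.inl rfl
    · have h0 : 0 < ‖x‖ := norm_pos_iff.2 hx0
      have h1 : ‖x‖ < 1 := mem_ball_zero_iff.1 hx
      have hP : ∃ m : ℕ, (1/2 : ℝ)^m < ‖x‖ :=
        exists_pow_lt_of_lt_one h0 (by norm_num)
      have hn₀ : (1/2 : ℝ) ^ (Nat.find hP) < ‖x‖ := Nat.find_spec hP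
      have hne : Nat.find hP ≠ 0 := by
        intro h
        rw [h, pow_zero] at hn₀; linarith
      obtain ⟨k, hk⟩ := Nat.exists_eq_succ_of_ne_zero hne
      have hmin : ¬ ((1/2 : ℝ)^k < ‖x‖) := Nat.find_min hP (by omega)
      refine Or.inr (Set.mem_iUnion.2 ⟨k, ?_, ?_⟩)
      · exact mem_closedBall_zero_iff.2 (not_lt.1 hmin)
      · intro hball
        have := mem_ball_zero_iff.1 hball
        rw [hk, Nat.succ_eq_add_one] at hn₀
        linarith
  have hbound : ∀ n : ℕ, ∫⁻ x in S n, f x ≤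
      ENNReal.ofReal (((1/2 : ℝ)^(n+1)) ^ (-β)) * volume (closedBall (0 : E) ((1/2 : ℝ)^n)) := by
    intro n
    have hmono : ∀ x ∈ S n, f x ≤ ENNReal.ofReal (((1/2 : ℝ)^(n+1)) ^ (-β)) := by
      intro x hx
      have hlow : (1/2 : ℝ)^(n+1) ≤ ‖x‖ := by
        have := hx.2
        simpa [mem_ball_zero_iff, not_lt] using this
      refine ENNReal.ofReal_le_ofReal ?_
      exact Real.rpow_le_rpow_of_nonpos (by positivity) hlow (by linarith)
    calc ∫⁻ x in S n, f x ≤ ∫⁻ _ in S n, ENNReal.ofReal (((1/2 : ℝ)^(n+1)) ^ (-β)) :=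
          setLIntegral_mono measurable_const hmono
      _ = ENNReal.ofReal (((1/2 : ℝ)^(n+1)) ^ (-β)) * volume (S n) := by
          rw [setLIntegral_const]
      _ ≤ _ := by
          gcongr
          exact (Set.diff_subset).trans (subset_refl _)
  have hzero : ∫⁻ x in ({0} : Set E), f x = 0 := by
    rw [Measure.restrict_eq_zero.2 (measure_singleton 0), lintegral_zero_measure]
  have h2 : (0:ℝ) < 2 := two_pos
  have key : ∀ m : ℕ, ((1/2 : ℝ))^m = (2:ℝ)^(-(m:ℝ)) := by
    intro m
    rw [Real.rpow_neg h2.le, Real.rpow_natCast, one_div, inv_pow]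
  have hgeom : ∀ n : ℕ, ((1/2 : ℝ)^(n+1)) ^ (-β) * ((1/2 : ℝ)^n) ^ (d:ℕ) =
      (2:ℝ)^β * ((2:ℝ)^(β - (d:ℝ)))^n := by
    intro n
    rw [key, key, ← Real.rpow_natCast ((2:ℝ)^(-((n:ℕ):ℝ))) d,
      ← Real.rpow_natCast ((2:ℝ)^(β - (d:ℝ))) n,
      ← Real.rpow_mul h2.le, ← Real.rpow_mul h2.le, ← Real.rpow_mul h2.le,
      ← Real.rpow_add h2, ← Real.rpow_add h2]
    congr 1
    push_cast
    ring
  set q : ℝ≥0∞ := ENNReal.ofReal ((2:ℝ)^(β - (d:ℝ))) with hq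
  have hq1 : q < 1 := by
    rw [hq, ← ENNReal.ofReal_one]
    exact ENNReal.ofReal_lt_ofReal_iff_of_nonneg (Real.rpow_nonneg h2.le _) |>.2
      (Real.rpow_lt_one_of_one_lt_of_neg one_lt_two (by linarith))
  have hB : volume (closedBall (0 : E) 1) < ⊤ := measure_closedBall_lt_top
  calc ∫⁻ x in ball (0 : E) 1, f x
      ≤ ∫⁻ x in ({0} ∪ ⋃ n, S n : Set E), f x := lintegral_mono_set hcover
    _ ≤ (∫⁻ x in ({0} : Set E), f x) + ∫⁻ x in ⋃ n, S n, f x := lintegral_union_le _ _ _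
    _ = ∫⁻ x in ⋃ n, S n, f x := by rw [hzero, zero_add]
    _ ≤ ∑' n, ∫⁻ x in S n, f x := lintegral_iUnion_le _ _
    _ ≤ ∑' n, ENNReal.ofReal (((1/2 : ℝ)^(n+1)) ^ (-β)) *
          volume (closedBall (0 : E) ((1/2 : ℝ)^n)) := ENNReal.tsum_le_tsum hbound
    _ = ∑' n, ENNReal.ofReal ((2:ℝ)^β) * q^n * volume (closedBall (0 : E) 1) := by
        refine tsum_congr fun n => ?_
        rw [Measure.addHaar_closedBall' _ _ (by positivity), hfr,
          ← mul_assoc, ← ENNReal.ofReal_mul (by positivity), hgeom n,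
          ENNReal.ofReal_mul (by positivity), hq, ← ENNReal.ofReal_pow (by positivity)]
    _ = ENNReal.ofReal ((2:ℝ)^β) * (∑' n, q^n) * volume (closedBall (0 : E) 1) := by
        rw [ENNReal.tsum_mul_right, ENNReal.tsum_mul_left]
    _ < ⊤ := by
        rw [ENNReal.tsum_geometric]
        refine ENNReal.mul_lt_top (ENNReal.mul_lt_top ENNReal.ofReal_lt_top ?_) hB
        rw [lt_top_iff_ne_top, Ne, ENNReal.inv_eq_top]
        exact (tsub_pos_of_lt hq1).ne'

lemma integrable_rieszF (d : ℕ) (hd : 1 ≤ d) {β : ℝ} (hβ0 : 0 < β) (hβd : β < (d : ℝ)) :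
    Integrable ((ball (0 : EuclideanSpace ℝ (Fin d)) 1).indicator
      (fun x => ‖x‖ ^ (-β))) := by
  set E := EuclideanSpace ℝ (Fin d)
  have hm : Measurable (fun x : E => ‖x‖ ^ (-β)) := by measurability
  constructor
  · exact (hm.indicator measurableSet_ball).aestronglyMeasurable
  · rw [hasFiniteIntegral_iff_ofReal (Filter.Eventually.of_forall fun x =>
      Set.indicator_nonneg (fun y _ => Real.rpow_nonneg (norm_nonneg y) _) x)]
    have heq : (fun x : E => ENNReal.ofReal
        ((ball (0:E) 1).indicator (fun x => ‖x‖ ^ (-β)) x)) =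
        (ball (0:E) 1).indicator (fun x => ENNReal.ofReal (‖x‖ ^ (-β))) := by
      funext x
      by_cases h : x ∈ ball (0:E) 1 <;> simp [h]
    rw [heq, lintegral_indicator measurableSet_ball]
    exact riesz_ball_lintegral_lt_top d hd hβ0 hβd

lemma integrable_phi (d : ℕ) (hd : 1 ≤ d) {α c₀ : ℝ} (hα : 0 < α) (hc₀ : 0 < c₀)
    (φ : EuclideanSpace ℝ (Fin d) → ℝ)
    (hφ_meas : Measurable φ) (hφ_nonneg : ∀ x, 0 ≤ φ x)
    (hφ_bdd : ∀ x, φ x ≤ c₀)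
    (hφ_decay : ∀ x : EuclideanSpace ℝ (Fin d), x ≠ 0 → φ x ≤ c₀ * ‖x‖ ^ (-((d : ℝ) + α))) :
    Integrable φ := by
  set r : ℝ := (d : ℝ) + α with hr
  have hr0 : 0 < r := by positivity
  have hfr : Module.finrank ℝ (EuclideanSpace ℝ (Fin d)) = d := finrank_euclideanSpace_fin
  have h2 : (0:ℝ) < 2 := two_pos
  have h2r : (2:ℝ)^r * (2:ℝ)^(-r) = 1 := by
    rw [← Real.rpow_add h2]; simp
  have hM : Integrable (fun x : EuclideanSpace ℝ (Fin d) => c₀ * (2:ℝ)^r * (1 + ‖x‖) ^ (-r)) :=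
    (integrable_one_add_norm (by rw [hfr]; linarith)).const_mul _
  refine hM.mono' hφ_meas.aestronglyMeasurable (Filter.Eventually.of_forall fun x => ?_)
  rw [Real.norm_of_nonneg (hφ_nonneg x)]
  rcases le_or_gt ‖x‖ 1 with hx1 | hx1
  · have h1 : (2:ℝ)^(-r) ≤ (1 + ‖x‖)^(-r) :=
      Real.rpow_le_rpow_of_nonpos (by positivity) (by linarith) (by linarith)
    calc φ x ≤ c₀ := hφ_bdd x
      _ = c₀ * (2:ℝ)^r * (2:ℝ)^(-r) := by rw [mul_assoc, h2r, mul_one]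
      _ ≤ c₀ * (2:ℝ)^r * (1 + ‖x‖)^(-r) := by
          refine mul_le_mul_of_nonneg_left h1 ?_
          positivity
  · have hx0 : x ≠ 0 := by
      intro h; rw [h, norm_zero] at hx1; linarith
    have h1 : ((2:ℝ) * ‖x‖)^(-r) ≤ (1 + ‖x‖)^(-r) :=
      Real.rpow_le_rpow_of_nonpos (by positivity) (by linarith) (by linarith)
    have h3 : ((2:ℝ) * ‖x‖)^(-r) = (2:ℝ)^(-r) * ‖x‖^(-r) :=
      Real.mul_rpow h2.le (norm_nonneg x)
    calc φ x ≤ c₀ * ‖x‖ ^ (-r) := hφ_decay x hx0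
      _ = c₀ * (2:ℝ)^r * ((2:ℝ)^(-r) * ‖x‖^(-r)) := by
          rw [mul_assoc, ← mul_assoc ((2:ℝ)^r), h2r, one_mul]
      _ = c₀ * (2:ℝ)^r * ((2:ℝ) * ‖x‖)^(-r) := by rw [h3]
      _ ≤ c₀ * (2:ℝ)^r * (1 + ‖x‖)^(-r) := by
          refine mul_le_mul_of_nonneg_left h1 ?_
          positivity

lemma riesz_conv_uniform_bound (d : ℕ) (hd : 1 ≤ d) (α β c₀ : ℝ)
    (hα : 0 < α) (hβ0 : 0 < β) (hβd : β < (d : ℝ)) (hc₀ : 0 < c₀)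
    (φ : EuclideanSpace ℝ (Fin d) → ℝ)
    (hφ_meas : Measurable φ) (hφ_nonneg : ∀ x, 0 ≤ φ x)
    (hφ_bdd : ∀ x, φ x ≤ c₀)
    (hφ_decay : ∀ x : EuclideanSpace ℝ (Fin d), x ≠ 0 → φ x ≤ c₀ * ‖x‖ ^ (-((d : ℝ) + α))) :
    ∃ C, 0 < C ∧ ∀ z : EuclideanSpace ℝ (Fin d),
      ∫ x, φ x * ‖z - x‖ ^ (-β) ≤ C := by
  set F := (ball (0 : EuclideanSpace ℝ (Fin d)) 1).indicator
      (fun x : EuclideanSpace ℝ (Fin d) => ‖x‖ ^ (-β)) with hF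
  have hF_int : Integrable F := integrable_rieszF d hd hβ0 hβd
  have hφ_int : Integrable φ := integrable_phi d hd hα hc₀ φ hφ_meas hφ_nonneg hφ_bdd hφ_decay
  have hFnn : ∀ y, 0 ≤ F y := fun y =>
    Set.indicator_nonneg (fun y _ => Real.rpow_nonneg (norm_nonneg y) _) y
  refine ⟨c₀ * (∫ x, F x) + (∫ x, φ x) + 1, ?_, fun z => ?_⟩
  · have h1 : 0 ≤ ∫ x, F x := integral_nonneg hFnn
    have h2 : 0 ≤ ∫ x, φ x := integral_nonneg hφ_nonneg
    have h3 : 0 ≤ c₀ * ∫ x, F x := mul_nonneg hc₀.le h1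
    linarith
  · set g : EuclideanSpace ℝ (Fin d) → ℝ := fun x => c₀ * F (z - x) + φ x with hg
    have hg_int : Integrable g := ((hF_int.comp_sub_left z).const_mul c₀).add hφ_int
    have hle : ∀ x, φ x * ‖z - x‖ ^ (-β) ≤ g x := by
      intro x
      rcases lt_or_ge ‖z - x‖ 1 with h | h
      · have hmem : z - x ∈ ball (0 : EuclideanSpace ℝ (Fin d)) 1 := mem_ball_zero_iff.2 h
        have hFx : F (z - x) = ‖z - x‖ ^ (-β) := Set.indicator_of_mem hmem _
        have h1 : φ x * ‖z - x‖ ^ (-β) ≤ c₀ * ‖z - x‖ ^ (-β) :=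
          mul_le_mul_of_nonneg_right (hφ_bdd x) (Real.rpow_nonneg (norm_nonneg _) _)
        have h2 := hφ_nonneg x
        simp only [hg, hFx]
        linarith
      · have h1 : ‖z - x‖ ^ (-β) ≤ 1 :=
          Real.rpow_le_one_of_one_le_of_nonpos h (by linarith)
        have h2 : φ x * ‖z - x‖ ^ (-β) ≤ φ x := by
          calc φ x * ‖z - x‖ ^ (-β) ≤ φ x * 1 := mul_le_mul_of_nonneg_left h1 (hφ_nonneg x)
            _ = φ x := mul_one _
        have h3 : 0 ≤ c₀ * F (z - x) := mul_nonneg hc₀.le (hFnn _)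
        simp only [hg]
        linarith
    have hmono : ∫ x, φ x * ‖z - x‖ ^ (-β) ≤ ∫ x, g x :=
      integral_mono_of_nonneg (Filter.Eventually.of_forall fun x =>
        mul_nonneg (hφ_nonneg x) (Real.rpow_nonneg (norm_nonneg _) _)) hg_int
        (Filter.Eventually.of_forall hle)
    have hgval : ∫ x, g x = c₀ * (∫ x, F x) + ∫ x, φ x := by
      simp only [hg]
      rw [integral_add ((hF_int.comp_sub_left z).const_mul c₀) hφ_int,
        integral_const_mul, integral_sub_left_eq_self F volume z]
    rw [hgval] at hmono
    linarith


/-- Bound on the convolution of the scaled heat kernel with the Riesz kernel: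
if `φ` is a nonnegative measurable function with `φ x ≤ c₀ * min 1 (|x|^{-d-α})` and
`0 < β < d`, then there is `c₁ > 0` such that for all `t > 0` and `w ∈ ℝ^d`,
`∫ t^{-d/α} φ((w-u) t^{-1/α}) |u|^{-β} du ≤ c₁ t^{-β/α}`. -/
theorem riesz_kernel_single_integral_bound (d : ℕ) (hd : 1 ≤ d) (α β c₀ : ℝ)
    (hα : 0 < α) (hβ0 : 0 < β) (hβd : β < (d : ℝ)) (hc₀ : 0 < c₀)
    (φ : EuclideanSpace ℝ (Fin d) → ℝ)
    (hφ_meas : Measurable φ) (hφ_nonneg : ∀ x, 0 ≤ φ x)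
    (hφ_bdd : ∀ x, φ x ≤ c₀)
    (hφ_decay : ∀ x : EuclideanSpace ℝ (Fin d), x ≠ 0 → φ x ≤ c₀ * ‖x‖ ^ (-((d : ℝ) + α))) :
    ∃ c₁ > 0, ∀ t : ℝ, 0 < t → ∀ w : EuclideanSpace ℝ (Fin d),
      (∫ u : EuclideanSpace ℝ (Fin d),
        t ^ (-(d : ℝ) / α) * φ ((t ^ (-(1 : ℝ) / α)) • (w - u)) * ‖u‖ ^ (-β))
        ≤ c₁ * t ^ (-β / α) := by
  obtain ⟨C, hC0, hC⟩ := riesz_conv_uniform_bound d hd α β c₀ hα hβ0 hβd hc₀ φ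
    hφ_meas hφ_nonneg hφ_bdd hφ_decay
  refine ⟨C, hC0, fun t ht w => ?_⟩
  have hfr : Module.finrank ℝ (EuclideanSpace ℝ (Fin d)) = d := finrank_euclideanSpace_fin
  set s : ℝ := t ^ (-(1 : ℝ) / α) with hs
  set r : ℝ := t ^ ((1 : ℝ) / α) with hrr
  have hr0 : 0 < r := Real.rpow_pos_of_pos ht _
  have hs0 : 0 < s := Real.rpow_pos_of_pos ht _
  have hrs : r * s = 1 := by
    rw [hs, hrr, ← Real.rpow_add ht]
    rw [show (1:ℝ)/α + -(1:ℝ)/α = 0 by ring, Real.rpow_zero]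
  have hsd : s ^ d = t ^ (-(d : ℝ) / α) := by
    rw [hs, ← Real.rpow_natCast (t ^ (-(1:ℝ)/α)) d, ← Real.rpow_mul ht.le]
    congr 1
    ring
  have hsd_prod : t ^ (-(d : ℝ) / α) * (s ^ d)⁻¹ = 1 := by
    rw [hsd]
    exact mul_inv_cancel₀ (Real.rpow_pos_of_pos ht _).ne'
  have hrb : r ^ (-β) = t ^ (-β / α) := by
    rw [hrr, ← Real.rpow_mul ht.le]
    congr 1
    ring
  set z : EuclideanSpace ℝ (Fin d) := r⁻¹ • w with hz
  set g : EuclideanSpace ℝ (Fin d) → ℝ := fun u => φ (s • u) * ‖w - u‖ ^ (-β) with hg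
  set h : EuclideanSpace ℝ (Fin d) → ℝ := fun x => φ x * ‖w - r • x‖ ^ (-β) with hh
  have step0 : ∫ u : EuclideanSpace ℝ (Fin d),
      t ^ (-(d : ℝ) / α) * φ (s • (w - u)) * ‖u‖ ^ (-β)
      = t ^ (-(d : ℝ) / α) * ∫ u, φ (s • (w - u)) * ‖u‖ ^ (-β) := by
    simp_rw [mul_assoc]
    exact integral_const_mul _ _
  have step1 : (∫ u, φ (s • (w - u)) * ‖u‖ ^ (-β)) = ∫ u, g u := by
    rw [← integral_sub_left_eq_self g volume w]
    congr 1
    funext u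
    simp only [hg, sub_sub_cancel]
  have step2 : (∫ u, g u) = (s ^ d)⁻¹ * ∫ x, h x := by
    have hcomp : (∫ u, h (s • u)) = |(s ^ d)⁻¹| • ∫ x, h x := by
      have := MeasureTheory.Measure.integral_comp_smul (volume) h s
      rwa [hfr] at this
    have hgh : g = fun u => h (s • u) := by
      funext u
      simp only [hg, hh, smul_smul, hrs, one_smul]
    rw [hgh, hcomp, abs_of_nonneg (inv_nonneg.2 (pow_nonneg hs0.le _)), smul_eq_mul]
  have step3 : (∫ x, h x) = r ^ (-β) * ∫ x, φ x * ‖z - x‖ ^ (-β) := by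
    have hnorm : ∀ x : EuclideanSpace ℝ (Fin d),
        ‖w - r • x‖ ^ (-β) = r ^ (-β) * ‖z - x‖ ^ (-β) := by
      intro x
      have hw : w - r • x = r • (z - x) := by
        rw [smul_sub, hz, smul_inv_smul₀ hr0.ne']
      rw [hw, norm_smul, Real.norm_eq_abs, abs_of_pos hr0,
        Real.mul_rpow hr0.le (norm_nonneg _)]
    simp only [hh]
    rw [← integral_const_mul]
    congr 1
    funext x
    rw [hnorm x]
    ring
  calc ∫ u : EuclideanSpace ℝ (Fin d),
        t ^ (-(d : ℝ) / α) * φ (s • (w - u)) * ‖u‖ ^ (-β)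
      = t ^ (-(d : ℝ) / α) * ∫ u, φ (s • (w - u)) * ‖u‖ ^ (-β) := step0
    _ = t ^ (-(d : ℝ) / α) * ((s ^ d)⁻¹ * ∫ x, h x) := by rw [step1, step2]
    _ = ∫ x, h x := by rw [← mul_assoc, hsd_prod, one_mul]
    _ = r ^ (-β) * ∫ x, φ x * ‖z - x‖ ^ (-β) := step3
    _ ≤ r ^ (-β) * C := mul_le_mul_of_nonneg_left (hC z) (Real.rpow_nonneg hr0.le _)
    _ = C * t ^ (-β / α) := by rw [hrb, mul_comm]
end
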